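/- arXiv:1803.03017 — 4 statements merged into one kernel-verified Lean document; each statement's English description precedes it below -/
import Mathlib

section
/- Let Φ be an irreducible crystallographic root system with positive system Φ⁺ and simple system Π, and L ⊊ Π. If α = k₁β + k₂γ with α, β, γ ∈ Φ⁺ and k₁, k₂ ∈ ℝ_{≥0}, then d_L(α) = k₁·d_L(β) + k₂·d_L(γ). -/
open scoped RealInnerProductSpace

namespace AffineBiclosed

variable {V : Type*} [NormedAddCommGroup V] [InnerProductSpace ℝ V]

/-- An irreducible crystallographic root system in the Euclidean space `V`. -/
structure IsIrrCrystRootSystem (Φ : Set V) : Prop where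
  finite : Φ.Finite
  nonzero : (0 : V) ∉ Φ
  spanning : Submodule.span ℝ Φ = ⊤
  reflect_mem : ∀ α ∈ Φ, ∀ β ∈ Φ, β - (2 * ⟪β, α⟫ / ⟪α, α⟫) • α ∈ Φ
  crystallographic : ∀ α ∈ Φ, ∀ β ∈ Φ, ∃ k : ℤ, (k : ℝ) = 2 * ⟪β, α⟫ / ⟪α, α⟫
  reduced : ∀ α ∈ Φ, ∀ t : ℝ, t • α ∈ Φ → t = 1 ∨ t = -1
  irreducible : ∀ Φ₁ Φ₂ : Set V, Φ₁ ∪ Φ₂ = Φ → Disjoint Φ₁ Φ₂ →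
      (∀ α ∈ Φ₁, ∀ β ∈ Φ₂, ⟪α, β⟫ = 0) → Φ₁ = ∅ ∨ Φ₂ = ∅

/-- `Pos` is a positive system of the root system `Φ`. -/
def IsPositiveSystem (Φ Pos : Set V) : Prop :=
  ∃ f : V →ₗ[ℝ] ℝ, (∀ α ∈ Φ, f α ≠ 0) ∧ Pos = {α ∈ Φ | 0 < f α}

/-- The simple system of a positive system: its indecomposable elements. -/
def simples (Pos : Set V) : Set V :=
  {α ∈ Pos | ¬ ∃ β ∈ Pos, ∃ γ ∈ Pos, α = β + γ}

/-- The root subsystem of `Φ` generated by a set `Δ` of simple roots. -/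
def subsys (Φ Δ : Set V) : Set V := Φ ∩ (Submodule.span ℝ Δ : Set V)

/-- The biclosed set `Ψ⁺_{L,M} = (Ψ⁺ \ Φ_L) ∪ Φ_M` in `Φ`. -/
def posLM (Φ Pos L M : Set V) : Set V := (Pos \ subsys Φ L) ∪ subsys Φ M

section Closure

variable {E : Type*} [AddCommGroup E] [Module ℝ E]

/-- `Γ` is closed in `T`. -/
def IsClosedIn (T Γ : Set E) : Prop :=
  Γ ⊆ T ∧ ∀ a ∈ Γ, ∀ b ∈ Γ, ∀ k₁ k₂ : ℝ, 0 ≤ k₁ → 0 ≤ k₂ →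
    k₁ • a + k₂ • b ∈ T → k₁ • a + k₂ • b ∈ Γ

/-- `Γ` is biclosed in `T`. -/
def IsBiclosedIn (T Γ : Set E) : Prop := IsClosedIn T Γ ∧ IsClosedIn T (T \ Γ)

/-- The closure of `X` in `T`: the smallest subset of `T` closed in `T` containing `X`. -/
def closureIn (T X : Set E) : Set E := ⋂₀ {Γ : Set E | X ⊆ Γ ∧ IsClosedIn T Γ}

end Closure

/-- For `Γ ⊆ Φ`, the set `Γ̂ ⊆ V × ℝ`, where `δ = (0,1)`; positivity is measured by the
standard positive system `Pos`. -/
def hat (Pos Γ : Set V) : Set (V × ℝ) :=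
  {x | ∃ α ∈ Γ, ∃ n : ℕ, x.1 = α ∧
    ((α ∈ Pos ∧ x.2 = (n : ℝ)) ∨ (α ∉ Pos ∧ x.2 = (n : ℝ) + 1))}

/-- The reflection in the affine root `a`, as a function on `V × ℝ`, with respect to the
degenerate bilinear form `⟨(v,s),(w,t)⟩ = ⟪v,w⟫`. -/
noncomputable def reflVec (a : V × ℝ) (x : V × ℝ) : V × ℝ :=
  x - (2 * ⟪x.1, a.1⟫ / ⟪a.1, a.1⟫) • a

theorem reflVec_involutive (a : V × ℝ) : Function.Involutive (reflVec a) := by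
  intro x
  by_cases h : ⟪a.1, a.1⟫ = 0
  · simp only [reflVec, h, div_zero, zero_smul, sub_zero]
  · unfold reflVec
    have h1 : (x - (2 * ⟪x.1, a.1⟫ / ⟪a.1, a.1⟫) • a).1
        = x.1 - (2 * ⟪x.1, a.1⟫ / ⟪a.1, a.1⟫) • a.1 := rfl
    rw [h1]
    have key : 2 * ⟪x.1 - (2 * ⟪x.1, a.1⟫ / ⟪a.1, a.1⟫) • a.1, a.1⟫ / ⟪a.1, a.1⟫
        = -(2 * ⟪x.1, a.1⟫ / ⟪a.1, a.1⟫) := by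
      rw [inner_sub_left, real_inner_smul_left]
      field_simp
      ring
    rw [key, neg_smul, sub_neg_eq_add, sub_add_cancel]

/-- The reflection in the affine root `a`, as a permutation of `V × ℝ`. -/
noncomputable def reflPerm (a : V × ℝ) : Equiv.Perm (V × ℝ) :=
  Function.Involutive.toPerm _ (reflVec_involutive a)

/-- The affine Weyl group of `Φ`, realized as the group of permutations of `V × ℝ`
generated by the reflections in the affine roots. -/
noncomputable def affineWeyl (Φ Pos : Set V) : Subgroup (Equiv.Perm (V × ℝ)) :=
  Subgroup.closure (reflPerm '' hat Pos Φ)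

/-- The inversion set `Φ_w = {a ∈ Φ̃⁺ | w⁻¹ a ∈ −Φ̃⁺}`. -/
def invSetOf (Φ Pos : Set V) (w : Equiv.Perm (V × ℝ)) : Set (V × ℝ) :=
  {a ∈ hat Pos Φ | -(w⁻¹ a) ∈ hat Pos Φ}

/-- The product of the reflections in the listed affine roots. -/
noncomputable def wordProd (l : List (V × ℝ)) : Equiv.Perm (V × ℝ) :=
  (l.map reflPerm).prod

/-- The simple affine roots: the indecomposable elements of `Φ̃⁺`. -/
def affSimples (Φ Pos : Set V) : Set (V × ℝ) :=
  {a ∈ hat Pos Φ | ¬ ∃ b ∈ hat Pos Φ, ∃ c ∈ hat Pos Φ, a = b + c}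

/-- `l` is a reduced word (in the simple affine reflections). -/
def IsReducedWord (Φ Pos : Set V) (l : List (V × ℝ)) : Prop :=
  (∀ a ∈ l, a ∈ affSimples Φ Pos) ∧
    ∀ l' : List (V × ℝ), (∀ a ∈ l', a ∈ affSimples Φ Pos) →
      wordProd l' = wordProd l → l.length ≤ l'.length

/-- The length-`n` prefix of an infinite word. -/
def prefixWord (ω : ℕ → V × ℝ) (n : ℕ) : List (V × ℝ) :=
  List.ofFn (fun i : Fin n => ω i)

/-- `ω` is an infinite reduced expression. -/
def IsInfRedExpr (Φ Pos : Set V) (ω : ℕ → V × ℝ) : Prop :=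
  ∀ n, IsReducedWord Φ Pos (prefixWord ω n)

/-- The inversion set of an infinite reduced expression. -/
def infInvSet (Φ Pos : Set V) (ω : ℕ → V × ℝ) : Set (V × ℝ) :=
  ⋃ n, invSetOf Φ Pos (wordProd (prefixWord ω n))

/-- The action `x·Γ = (Φ_x \ x(−Γ)) ∪ (x(Γ) \ (−Φ_x))` of the affine Weyl group on
biclosed sets. -/
def dotAct (Φ Pos : Set V) (x : Equiv.Perm (V × ℝ)) (Γ : Set (V × ℝ)) : Set (V × ℝ) :=
  (invSetOf Φ Pos x \ (⇑x '' (-Γ))) ∪ ((⇑x '' Γ) \ (-(invSetOf Φ Pos x)))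

end AffineBiclosed

namespace AffineBiclosed

variable {V : Type*} [NormedAddCommGroup V] [InnerProductSpace ℝ V]

open Classical in
/-- The function `d_L : Φ⁺ → ℕ`: for `α ∈ Φ⁺_{L,∅}`, the maximal `n` such that `α` can be
written as the sum of `n` elements of `Φ⁺_{L,∅}`; and `0` otherwise. -/
noncomputable def dL (Φ Pos L : Set V) (α : V) : ℕ :=
  if α ∈ posLM Φ Pos L ∅ then
    sSup {n : ℕ | ∃ l : List V, l.length = n ∧ (∀ β ∈ l, β ∈ posLM Φ Pos L ∅) ∧ l.sum = α}
  else 0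

end AffineBiclosed

namespace AffineBiclosed
namespace DLProof

variable {V : Type*} [NormedAddCommGroup V] [InnerProductSpace ℝ V]
variable {Φ Pos L : Set V} {f : V →ₗ[ℝ] ℝ}

lemma inner_self_pos' (hΦ : IsIrrCrystRootSystem Φ) {a : V} (ha : a ∈ Φ) : 0 < ⟪a, a⟫ := by
  have h0 : a ≠ 0 := fun h => hΦ.nonzero (h ▸ ha)
  nlinarith [norm_pos_iff.2 h0, real_inner_self_eq_norm_sq a]

lemma neg_mem (hΦ : IsIrrCrystRootSystem Φ) {a : V} (ha : a ∈ Φ) : -a ∈ Φ := by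
  have h := hΦ.reflect_mem a ha a ha
  have hne : ⟪a,a⟫ ≠ 0 := ne_of_gt (inner_self_pos' hΦ ha)
  have h2 : 2 * ⟪a,a⟫ / ⟪a,a⟫ = 2 := by field_simp
  rw [h2] at h
  have : a - (2:ℝ) • a = -a := by module
  rwa [this] at h

lemma mem_pos_iff (hP : Pos = {α ∈ Φ | 0 < f α}) {a : V} :
    a ∈ Pos ↔ a ∈ Φ ∧ 0 < f a := by rw [hP]; rfl

lemma pos_or_neg (hΦ : IsIrrCrystRootSystem Φ) (hf : ∀ α ∈ Φ, f α ≠ 0)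
    (hP : Pos = {α ∈ Φ | 0 < f α}) {a : V} (ha : a ∈ Φ) : a ∈ Pos ∨ -a ∈ Pos := by
  rcases (hf a ha).lt_or_gt with h | h
  · right
    exact (mem_pos_iff hP).2 ⟨neg_mem hΦ ha, by simpa using h⟩
  · left; exact (mem_pos_iff hP).2 ⟨ha, h⟩

lemma sub_mem (hΦ : IsIrrCrystRootSystem Φ) {a b : V} (ha : a ∈ Φ) (hb : b ∈ Φ)
    (hip : 0 < ⟪a,b⟫) (hne : a ≠ b) : a - b ∈ Φ := by
  obtain ⟨k, hk⟩ := hΦ.crystallographic b hb a ha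
  obtain ⟨k', hk'⟩ := hΦ.crystallographic a ha b hb
  have hbb := inner_self_pos' hΦ hb
  have haa := inner_self_pos' hΦ ha
  have hkpos : (0:ℤ) < k := by
    have : (0:ℝ) < (k:ℝ) := by rw [hk]; positivity
    exact_mod_cast this
  have hk'pos : (0:ℤ) < k' := by
    have : (0:ℝ) < (k':ℝ) := by
      rw [hk', real_inner_comm]; positivity
    exact_mod_cast this
  by_cases h1 : k = 1
  · have := hΦ.reflect_mem b hb a ha
    rw [← hk, h1] at this
    simpa using this
  by_cases h1' : k' = 1
  · have := hΦ.reflect_mem a ha b hb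
    rw [← hk', h1'] at this
    have := neg_mem hΦ this
    simpa using this
  -- both ≥ 2, contradiction via Cauchy-Schwarz
  exfalso
  have hk2 : (2:ℝ) ≤ (k:ℝ) := by exact_mod_cast (by omega : (2:ℤ) ≤ k)
  have hk'2 : (2:ℝ) ≤ (k':ℝ) := by exact_mod_cast (by omega : (2:ℤ) ≤ k')
  rw [hk] at hk2; rw [hk', real_inner_comm a b] at hk'2
  rw [le_div_iff₀ hbb] at hk2
  rw [le_div_iff₀ haa] at hk'2
  have hib : ⟪b,b⟫ ≤ ⟪a,b⟫ := by linarith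
  have hia : ⟪a,a⟫ ≤ ⟪a,b⟫ := by linarith
  have hcs : ⟪a,b⟫ ≤ ‖a‖ * ‖b‖ := real_inner_le_norm a b
  have heq : ⟪a,b⟫ = ‖a‖ * ‖b‖ := by
    nlinarith [real_inner_self_eq_norm_sq a, real_inner_self_eq_norm_sq b,
      mul_pos haa hbb]
  rw [inner_eq_norm_mul_iff_real] at heq
  have a0 : a ≠ 0 := fun h => hΦ.nonzero (h ▸ ha)
  have b0 : b ≠ 0 := fun h => hΦ.nonzero (h ▸ hb)
  have hb0 : ‖b‖ ≠ 0 := norm_ne_zero_iff.2 b0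
  have hab : a = (‖a‖ / ‖b‖) • b := by
    rw [div_eq_inv_mul, ← smul_smul, ← heq, smul_smul, inv_mul_cancel₀ hb0, one_smul]
  have := hΦ.reduced b hb (‖a‖ / ‖b‖) (hab ▸ ha)
  have hnorma : (0:ℝ) < ‖a‖ := norm_pos_iff.2 a0
  rcases this with h | h
  · rw [h, one_smul] at hab; exact hne hab
  · rw [h] at hab
    have : (0:ℝ) < ‖a‖ / ‖b‖ := by positivity
    rw [h] at this; linarith

end DLProof
end AffineBiclosed

namespace AffineBiclosed
namespace DLProof

variable {V : Type*} [NormedAddCommGroup V] [InnerProductSpace ℝ V]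
variable {Φ Pos L : Set V} {f : V →ₗ[ℝ] ℝ}

lemma pos_subset (hP : Pos = {α ∈ Φ | 0 < f α}) : Pos ⊆ Φ := by
  rw [hP]; exact fun x hx => hx.1

lemma mem_simples_iff {a : V} :
    a ∈ simples Pos ↔ a ∈ Pos ∧ ¬ ∃ β ∈ Pos, ∃ γ ∈ Pos, a = β + γ := Iff.rfl

/-- counting measure for strong induction on `f`-value -/
noncomputable def meas (f : V →ₗ[ℝ] ℝ) (Pos : Set V) (a : V) : ℕ :=
  {x ∈ Pos | f x < f a}.ncard

lemma meas_lt (hΦ : IsIrrCrystRootSystem Φ) (hP : Pos = {α ∈ Φ | 0 < f α})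
    {a b : V} (hb : b ∈ Pos) (h : f b < f a) : meas f Pos b < meas f Pos a := by
  apply Set.ncard_lt_ncard
  · rw [Set.ssubset_def]
    constructor
    · exact fun x hx => ⟨hx.1, hx.2.trans h⟩
    · intro hsub
      exact lt_irrefl _ (hsub ⟨hb, h⟩).2
  · exact hΦ.finite.subset (fun x hx => pos_subset hP hx.1)

lemma sum_of_simples_aux (hΦ : IsIrrCrystRootSystem Φ) (hP : Pos = {α ∈ Φ | 0 < f α}) :
    ∀ n : ℕ, ∀ a ∈ Pos, meas f Pos a = n →
    ∃ l : List V, l ≠ [] ∧ (∀ s ∈ l, s ∈ simples Pos) ∧ l.sum = a := by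
  intro n
  induction n using Nat.strong_induction_on with
  | _ n ih =>
    intro a haP hm
    by_cases hs : a ∈ simples Pos
    · exact ⟨[a], by simp, by simp [hs], by simp⟩
    · have hdec : ∃ b ∈ Pos, ∃ c ∈ Pos, a = b + c := by
        by_contra h
        exact hs (mem_simples_iff.2 ⟨haP, h⟩)
      obtain ⟨b, hb, c, hc, habc⟩ := hdec
      have hfb : 0 < f b := ((mem_pos_iff hP).1 hb).2
      have hfc : 0 < f c := ((mem_pos_iff hP).1 hc).2
      have hfab : f a = f b + f c := by rw [habc]; simp
      obtain ⟨lb, hlb0, hlbs, hlbsum⟩ :=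
        ih _ (hm ▸ meas_lt hΦ hP hb (by linarith)) b hb rfl
      obtain ⟨lc, hlc0, hlcs, hlcsum⟩ :=
        ih _ (hm ▸ meas_lt hΦ hP hc (by linarith)) c hc rfl
      refine ⟨lb ++ lc, by simp [hlb0], ?_, by simp [hlbsum, hlcsum, habc]⟩
      intro s hs'
      rcases List.mem_append.1 hs' with h | h
      exacts [hlbs s h, hlcs s h]

lemma sum_of_simples (hΦ : IsIrrCrystRootSystem Φ) (hP : Pos = {α ∈ Φ | 0 < f α})
    {a : V} (ha : a ∈ Pos) :
    ∃ l : List V, l ≠ [] ∧ (∀ s ∈ l, s ∈ simples Pos) ∧ l.sum = a :=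
  sum_of_simples_aux hΦ hP _ a ha rfl

lemma simples_inner_nonpos (hΦ : IsIrrCrystRootSystem Φ) (hf : ∀ α ∈ Φ, f α ≠ 0)
    (hP : Pos = {α ∈ Φ | 0 < f α}) {s t : V} (hs : s ∈ simples Pos) (ht : t ∈ simples Pos)
    (hne : s ≠ t) : ⟪s,t⟫ ≤ 0 := by
  by_contra h
  push_neg at h
  have hsub : s - t ∈ Φ := sub_mem hΦ (pos_subset hP hs.1) (pos_subset hP ht.1) h hne
  rcases pos_or_neg hΦ hf hP hsub with h1 | h1
  · exact hs.2 ⟨s - t, h1, t, ht.1, by abel⟩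
  · have h2 : t - s ∈ Pos := by simpa using h1
    exact ht.2 ⟨t - s, h2, s, hs.1, by abel⟩

end DLProof
end AffineBiclosed

namespace AffineBiclosed
namespace DLProof

variable {V : Type*} [NormedAddCommGroup V] [InnerProductSpace ℝ V]
variable {Φ Pos L : Set V} {f : V →ₗ[ℝ] ℝ}

lemma simples_linearIndependent (hΦ : IsIrrCrystRootSystem Φ) (hf : ∀ α ∈ Φ, f α ≠ 0)
    (hP : Pos = {α ∈ Φ | 0 < f α}) :
    LinearIndependent ℝ (fun x : simples Pos => (x : V)) := by
  classical
  rw [linearIndependent_subtype_iff, linearIndepOn_iff]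
  intro l hlsupp hlsum
  rw [Finsupp.mem_supported] at hlsupp
  rw [Finsupp.linearCombination_apply, Finsupp.sum] at hlsum
  set P := l.support.filter (fun s => 0 < l s) with hPdef
  set N := l.support.filter (fun s => ¬ 0 < l s) with hNdef
  set v := ∑ s ∈ P, l s • s with hvdef
  have hsplit : v + ∑ s ∈ N, l s • s = 0 := by
    rw [hvdef, Finset.sum_filter_add_sum_filter_not]
    simpa using hlsum
  have hvw : v = ∑ s ∈ N, (-(l s)) • s := by
    have h1 : ∑ s ∈ N, (-(l s)) • s = -∑ s ∈ N, l s • s := by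
      rw [← Finset.sum_neg_distrib]
      exact Finset.sum_congr rfl (fun s _ => by rw [neg_smul])
    rw [h1]
    exact eq_neg_of_add_eq_zero_left hsplit
  have hmemP : ∀ s ∈ P, s ∈ simples Pos ∧ 0 < l s := fun s hs =>
    ⟨hlsupp (Finset.mem_filter.1 hs).1, (Finset.mem_filter.1 hs).2⟩
  have hmemN : ∀ t ∈ N, t ∈ simples Pos ∧ l t < 0 := by
    intro t ht
    refine ⟨hlsupp (Finset.mem_filter.1 ht).1, ?_⟩
    have h2 := (Finset.mem_filter.1 ht).2
    have hne := Finsupp.mem_support_iff.1 (Finset.mem_filter.1 ht).1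
    exact lt_of_le_of_ne (not_lt.1 h2) hne
  have hvv : ⟪v, v⟫ ≤ 0 := by
    nth_rewrite 2 [hvw]
    rw [hvdef, sum_inner]
    apply Finset.sum_nonpos
    intro s hsP
    rw [inner_sum]
    apply Finset.sum_nonpos
    intro t htN
    rw [real_inner_smul_left, real_inner_smul_right]
    obtain ⟨hssim, hls⟩ := hmemP s hsP
    obtain ⟨htsim, hlt⟩ := hmemN t htN
    have hst : s ≠ t := fun h => by rw [h] at hls; linarith
    have hinner := simples_inner_nonpos hΦ hf hP hssim htsim hst
    have h3 := mul_nonpos_of_nonneg_of_nonpos (mul_pos hls (neg_pos.2 hlt)).le hinner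
    nlinarith [h3]
  have hv0 : v = 0 := by
    by_contra h
    have h2 : 0 < ⟪v,v⟫ := by nlinarith [norm_pos_iff.2 h, real_inner_self_eq_norm_sq v]
    linarith
  have hfv : f v = 0 := by rw [hv0]; simp
  have hfP : f v = ∑ s ∈ P, l s * f s := by
    rw [hvdef, map_sum]
    exact Finset.sum_congr rfl (fun s _ => by rw [map_smul, smul_eq_mul])
  have hfN : f v = ∑ s ∈ N, (-(l s)) * f s := by
    rw [hvw, map_sum]
    exact Finset.sum_congr rfl (fun s _ => by rw [map_smul, smul_eq_mul])
  have hfpos : ∀ s ∈ simples Pos, 0 < f s := fun s hs => ((mem_pos_iff hP).1 hs.1).2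
  have hPe : P = ∅ := by
    by_contra hne
    have hpos : 0 < ∑ s ∈ P, l s * f s := by
      apply Finset.sum_pos (fun s hs => mul_pos (hmemP s hs).2 (hfpos s (hmemP s hs).1))
      exact Finset.nonempty_iff_ne_empty.2 hne
    rw [← hfP, hfv] at hpos
    exact lt_irrefl _ hpos
  have hNe : N = ∅ := by
    by_contra hne
    have hpos : 0 < ∑ s ∈ N, (-(l s)) * f s := by
      apply Finset.sum_pos
        (fun s hs => mul_pos (by linarith [(hmemN s hs).2]) (hfpos s (hmemN s hs).1))
      exact Finset.nonempty_iff_ne_empty.2 hne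
    rw [← hfN, hfv] at hpos
    exact lt_irrefl _ hpos
  have hsup : l.support = ∅ := by
    have := Finset.filter_union_filter_not_eq (fun s => 0 < l s) l.support
    rw [← this, ← hPdef, ← hNdef, hPe, hNe]
    simp
  exact Finsupp.support_eq_empty.1 hsup

end DLProof
end AffineBiclosed

namespace AffineBiclosed
namespace DLProof

variable {V : Type*} [NormedAddCommGroup V] [InnerProductSpace ℝ V]
variable {Φ Pos L : Set V} {f : V →ₗ[ℝ] ℝ}

lemma refl_pos (hΦ : IsIrrCrystRootSystem Φ) (hf : ∀ α ∈ Φ, f α ≠ 0)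
    (hP : Pos = {α ∈ Φ | 0 < f α}) {s a : V} (hs : s ∈ simples Pos) (ha : a ∈ Pos)
    (hne : a ≠ s) : a - (2 * ⟪a,s⟫ / ⟪s,s⟫) • s ∈ Pos := by
  classical
  have hli : LinearIndepOn ℝ id (simples Pos) :=
    simples_linearIndependent hΦ hf hP
  set B := Module.Basis.extend hli with hB
  have hsub : simples Pos ⊆ hli.extend (Set.subset_univ _) :=
    hli.subset_extend _
  have repr_simple : ∀ t (ht : t ∈ simples Pos),
      B.repr t = Finsupp.single ⟨t, hsub ht⟩ 1 := by
    intro t ht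
    have hh : B ⟨t, hsub ht⟩ = t := Module.Basis.extend_apply_self hli ⟨t, hsub ht⟩
    have h2 : B.repr (B ⟨t, hsub ht⟩) = Finsupp.single ⟨t, hsub ht⟩ 1 := B.repr_self _
    rwa [hh] at h2
  have repr_nonneg_aux : ∀ l : List V, (∀ t ∈ l, t ∈ simples Pos) →
      ∀ b, 0 ≤ B.repr l.sum b := by
    intro l
    induction l with
    | nil => intro _ b; simp
    | cons t l ih =>
      intro hmem b
      rw [List.sum_cons, map_add]
      have h1 := ih (fun u hu => hmem u (List.mem_cons_of_mem _ hu)) b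
      have h2 : (0:ℝ) ≤ B.repr t b := by
        rw [repr_simple t (hmem t (List.mem_cons_self)), Finsupp.single_apply]
        split <;> norm_num
      simpa using add_nonneg h2 h1
  have repr_nonneg : ∀ x ∈ Pos, ∀ b, 0 ≤ B.repr x b := by
    intro x hx b
    obtain ⟨l, -, hls, hlsum⟩ := sum_of_simples hΦ hP hx
    rw [← hlsum]
    exact repr_nonneg_aux l hls b
  -- the reflected root
  set c := 2 * ⟪a,s⟫ / ⟪s,s⟫ with hc
  have hmem : a - c • s ∈ Φ :=
    hΦ.reflect_mem s (pos_subset hP hs.1) a (pos_subset hP ha)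
  rcases pos_or_neg hΦ hf hP hmem with h | h
  · exact h
  exfalso
  have hneg : c • s - a ∈ Pos := by simpa using h
  set i : hli.extend (Set.subset_univ _) := ⟨s, hsub hs⟩ with hi
  have hzero : ∀ b, b ≠ i → B.repr a b = 0 := by
    intro b hb
    have h1 := repr_nonneg a ha b
    have h2 := repr_nonneg _ hneg b
    rw [map_sub, map_smul, repr_simple s hs] at h2
    rw [Finsupp.sub_apply, Finsupp.smul_apply, Finsupp.single_apply] at h2
    rw [if_neg (fun hh : i = b => hb hh.symm)] at h2
    simp only [smul_zero, zero_sub, neg_nonneg] at h2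
    linarith
  have hrepr : B.repr a = Finsupp.single i (B.repr a i) := by
    ext b
    by_cases hbi : b = i
    · rw [hbi, Finsupp.single_eq_same]
    · rw [hzero b hbi, Finsupp.single_apply, if_neg (fun hh : i = b => hbi hh.symm)]
  set c' := B.repr a i with hc'
  have has : a = c' • s := by
    apply B.repr.injective
    rw [map_smul, repr_simple s hs, hrepr]
    rw [Finsupp.smul_single, smul_eq_mul, mul_one]
  have := hΦ.reduced s (pos_subset hP hs.1) c' (has ▸ pos_subset hP ha)
  rcases this with h1 | h1
  · rw [h1, one_smul] at has; exact hne has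
  · rw [h1, neg_one_smul] at has
    have hfa : 0 < f a := ((mem_pos_iff hP).1 ha).2
    have hfs : 0 < f s := ((mem_pos_iff hP).1 hs.1).2
    rw [has, map_neg] at hfa
    linarith

lemma exists_g (hΦ : IsIrrCrystRootSystem Φ) (hf : ∀ α ∈ Φ, f α ≠ 0)
    (hP : Pos = {α ∈ Φ | 0 < f α}) (L : Set V) :
    ∃ g : V →ₗ[ℝ] ℝ, ∀ s ∈ simples Pos, (s ∈ L → g s = 0) ∧ (s ∉ L → g s = 1) := by
  classical
  have hli : LinearIndepOn ℝ id (simples Pos) :=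
    simples_linearIndependent hΦ hf hP
  set B := Module.Basis.extend hli with hB
  have hsub : simples Pos ⊆ hli.extend (Set.subset_univ _) :=
    hli.subset_extend _
  refine ⟨B.constr ℝ (fun b => if (b:V) ∈ L then 0 else if (b:V) ∈ simples Pos then 1 else 0),
    fun s hs => ?_⟩
  have hBs : B ⟨s, hsub hs⟩ = s := Module.Basis.extend_apply_self hli ⟨s, hsub hs⟩
  constructor <;> intro hsl <;> rw [← hBs, Module.Basis.constr_basis] <;> simp [hs, hsl]

end DLProof
end AffineBiclosed

namespace AffineBiclosed
namespace DLProof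

variable {V : Type*} [NormedAddCommGroup V] [InnerProductSpace ℝ V]
variable {Φ Pos L : Set V} {f g : V →ₗ[ℝ] ℝ}

lemma span_L_g_zero (hL : L ⊆ simples Pos)
    (hg : ∀ s ∈ simples Pos, (s ∈ L → g s = 0) ∧ (s ∉ L → g s = 1))
    {a : V} (ha : a ∈ Submodule.span ℝ L) : g a = 0 := by
  have hle : Submodule.span ℝ L ≤ LinearMap.ker g :=
    Submodule.span_le.2 (fun x hx => LinearMap.mem_ker.2 ((hg x (hL hx)).1 hx))
  exact LinearMap.mem_ker.1 (hle ha)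

lemma g_nat_aux (hL : L ⊆ simples Pos)
    (hg : ∀ s ∈ simples Pos, (s ∈ L → g s = 0) ∧ (s ∉ L → g s = 1)) :
    ∀ l : List V, (∀ s ∈ l, s ∈ simples Pos) →
    ∃ n : ℕ, g l.sum = n ∧ (n = 0 → l.sum ∈ Submodule.span ℝ L) := by
  intro l
  induction l with
  | nil => exact fun _ => ⟨0, by simp, fun _ => by simp⟩
  | cons s l ih =>
    intro hmem
    obtain ⟨n, hn, hn0⟩ := ih (fun u hu => hmem u (List.mem_cons_of_mem _ hu))
    have hssim := hmem s (List.mem_cons_self)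
    by_cases hsl : s ∈ L
    · refine ⟨n, ?_, fun h0 => ?_⟩
      · rw [List.sum_cons, map_add, (hg s hssim).1 hsl, hn, zero_add]
      · rw [List.sum_cons]
        exact Submodule.add_mem _ (Submodule.subset_span hsl) (hn0 h0)
    · refine ⟨n + 1, ?_, fun h0 => by omega⟩
      rw [List.sum_cons, map_add, (hg s hssim).2 hsl, hn]
      push_cast; ring

lemma g_nat (hΦ : IsIrrCrystRootSystem Φ) (hP : Pos = {α ∈ Φ | 0 < f α})
    (hL : L ⊆ simples Pos)
    (hg : ∀ s ∈ simples Pos, (s ∈ L → g s = 0) ∧ (s ∉ L → g s = 1))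
    {a : V} (ha : a ∈ Pos) :
    ∃ n : ℕ, g a = n ∧ (n = 0 → a ∈ Submodule.span ℝ L) := by
  obtain ⟨l, -, hls, hlsum⟩ := sum_of_simples hΦ hP ha
  rw [← hlsum]
  exact g_nat_aux hL hg l hls

lemma g_ne_zero (hΦ : IsIrrCrystRootSystem Φ) (hP : Pos = {α ∈ Φ | 0 < f α})
    (hL : L ⊆ simples Pos)
    (hg : ∀ s ∈ simples Pos, (s ∈ L → g s = 0) ∧ (s ∉ L → g s = 1))
    {a : V} (ha : a ∈ Pos) (hspan : a ∉ Submodule.span ℝ L) : g a ≠ 0 := by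
  obtain ⟨n, hn, hn0⟩ := g_nat hΦ hP hL hg ha
  rw [hn]
  intro h
  exact hspan (hn0 (by exact_mod_cast h))

lemma g_ge_one (hΦ : IsIrrCrystRootSystem Φ) (hP : Pos = {α ∈ Φ | 0 < f α})
    (hL : L ⊆ simples Pos)
    (hg : ∀ s ∈ simples Pos, (s ∈ L → g s = 0) ∧ (s ∉ L → g s = 1))
    {a : V} (ha : a ∈ Pos) (hspan : a ∉ Submodule.span ℝ L) : 1 ≤ g a := by
  obtain ⟨n, hn, hn0⟩ := g_nat hΦ hP hL hg ha
  have : n ≠ 0 := fun h => hspan (hn0 h)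
  rw [hn]
  exact_mod_cast Nat.one_le_iff_ne_zero.2 this

lemma length_le_g (hΦ : IsIrrCrystRootSystem Φ) (hP : Pos = {α ∈ Φ | 0 < f α})
    (hL : L ⊆ simples Pos)
    (hg : ∀ s ∈ simples Pos, (s ∈ L → g s = 0) ∧ (s ∉ L → g s = 1)) :
    ∀ l : List V, (∀ b ∈ l, b ∈ Pos ∧ b ∉ Submodule.span ℝ L) →
    (l.length : ℝ) ≤ g l.sum := by
  intro l
  induction l with
  | nil => simp
  | cons b l ih =>
    intro hmem
    have h1 := ih (fun u hu => hmem u (List.mem_cons_of_mem _ hu))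
    have h2 := g_ge_one hΦ hP hL hg (hmem b (List.mem_cons_self)).1
      (hmem b (List.mem_cons_self)).2
    rw [List.sum_cons, map_add, List.length_cons]
    push_cast
    linarith

/-- The reflection in `s` as a linear map. -/
noncomputable def reflMap (s : V) : V →ₗ[ℝ] V :=
  LinearMap.id - (2 / ⟪s,s⟫) • ((innerSL ℝ s).toLinearMap.smulRight s)

lemma reflMap_apply (s x : V) : reflMap s x = x - (2 * ⟪x,s⟫ / ⟪s,s⟫) • s := by
  simp only [reflMap, LinearMap.sub_apply, LinearMap.id_apply, LinearMap.smul_apply,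
    LinearMap.smulRight_apply, ContinuousLinearMap.coe_coe, innerSL_apply_apply, smul_smul]
  rw [real_inner_comm s x]
  congr 1
  ring

lemma reflMap_invol {s : V} (hss : ⟪s,s⟫ ≠ 0) (x : V) : reflMap s (reflMap s x) = x := by
  rw [reflMap_apply, reflMap_apply]
  have key : 2 * ⟪x - (2 * ⟪x,s⟫ / ⟪s,s⟫) • s, s⟫ / ⟪s,s⟫ = -(2 * ⟪x,s⟫ / ⟪s,s⟫) := by
    rw [inner_sub_left, real_inner_smul_left]
    field_simp
    ring
  rw [key, neg_smul, sub_neg_eq_add, sub_add_cancel]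

end DLProof
end AffineBiclosed

namespace AffineBiclosed
namespace DLProof

variable {V : Type*} [NormedAddCommGroup V] [InnerProductSpace ℝ V]
variable {Φ Pos L : Set V} {f g : V →ₗ[ℝ] ℝ}

lemma exists_simple_pos_inner (hΦ : IsIrrCrystRootSystem Φ)
    (hP : Pos = {α ∈ Φ | 0 < f α}) {a : V} (ha : a ∈ Pos) :
    ∃ s ∈ simples Pos, 0 < ⟪a, s⟫ := by
  by_contra h
  push_neg at h
  obtain ⟨l, -, hls, hlsum⟩ := sum_of_simples hΦ hP ha
  have haa : 0 < ⟪a, a⟫ := inner_self_pos' hΦ (pos_subset hP ha)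
  have : ⟪a, l.sum⟫ ≤ 0 := by
    clear hlsum haa
    induction l with
    | nil => simp
    | cons s l ih =>
      rw [List.sum_cons, inner_add_right]
      have h1 := h s (hls s (List.mem_cons_self))
      have h2 := ih (fun u hu => hls u (List.mem_cons_of_mem _ hu))
      linarith
  rw [hlsum] at this
  linarith

lemma exists_decomp (hΦ : IsIrrCrystRootSystem Φ) (hf : ∀ α ∈ Φ, f α ≠ 0)
    (hP : Pos = {α ∈ Φ | 0 < f α}) (hL : L ⊆ simples Pos)
    (hg : ∀ s ∈ simples Pos, (s ∈ L → g s = 0) ∧ (s ∉ L → g s = 1)) :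
    ∀ N : ℕ, ∀ a ∈ Pos, meas f Pos a = N → ∀ n : ℕ, g a = n → 1 ≤ n →
    ∃ l : List V, l.length = n ∧ (∀ b ∈ l, b ∈ Pos ∧ b ∉ Submodule.span ℝ L) ∧ l.sum = a := by
  intro N
  induction N using Nat.strong_induction_on with
  | _ N ih =>
    intro a haP hm n hga hn1
    have haΦ : a ∈ Φ := pos_subset hP haP
    have haspan : a ∉ Submodule.span ℝ L := by
      intro hsp
      have := span_L_g_zero hL hg hsp
      rw [hga] at this
      have : n = 0 := by exact_mod_cast this
      omega
    by_cases hn : n = 1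
    · exact ⟨[a], by simp [hn], fun b hb => by
        rw [List.mem_singleton] at hb; exact hb ▸ ⟨haP, haspan⟩, by simp⟩
    have hn2 : 2 ≤ n := by omega
    -- a is not simple
    have hnsimple : a ∉ simples Pos := by
      intro hsim
      rcases Classical.em (a ∈ L) with h | h
      · have := (hg a hsim).1 h
        rw [hga] at this
        have : n = 0 := by exact_mod_cast this
        omega
      · have := (hg a hsim).2 h
        rw [hga] at this
        have : n = 1 := by exact_mod_cast this
        omega
    obtain ⟨s, hssim, hsip⟩ := exists_simple_pos_inner hΦ hP haP
    have hsΦ : s ∈ Φ := pos_subset hP hssim.1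
    have hane : a ≠ s := fun h => hnsimple (h ▸ hssim)
    have hfs : 0 < f s := ((mem_pos_iff hP).1 hssim.1).2
    have hfa : 0 < f a := ((mem_pos_iff hP).1 haP).2
    have hss : 0 < ⟪s,s⟫ := inner_self_pos' hΦ hsΦ
    rcases Classical.em (s ∈ L) with hsL | hsL
    · -- reflect a in s and use the same n
      set c := 2 * ⟪a,s⟫ / ⟪s,s⟫ with hc
      have hcpos : 0 < c := by rw [hc]; positivity
      have ha'' : a - c • s ∈ Pos := refl_pos hΦ hf hP hssim haP hane
      set a'' := a - c • s with ha''def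
      have hga'' : g a'' = n := by
        rw [ha''def, map_sub, map_smul, (hg s hssim).1 hsL, smul_zero, sub_zero, hga]
      have hfa'' : f a'' < f a := by
        rw [ha''def, map_sub, map_smul, smul_eq_mul]
        nlinarith
      obtain ⟨l, hlen, hmem, hsum⟩ :=
        ih _ (hm ▸ meas_lt hΦ hP ha'' hfa'') a'' ha'' rfl n hga'' hn1
      refine ⟨l.map (reflMap s), by simp [hlen], ?_, ?_⟩
      · intro b hb
        rw [List.mem_map] at hb
        obtain ⟨b', hb', rfl⟩ := hb
        obtain ⟨hb'P, hb'span⟩ := hmem b' hb'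
        have hb'ne : b' ≠ s := fun h =>
          hb'span (h ▸ Submodule.subset_span hsL)
        have hbP : reflMap s b' ∈ Pos := by
          rw [reflMap_apply]
          exact refl_pos hΦ hf hP hssim hb'P hb'ne
        refine ⟨hbP, fun hsp => ?_⟩
        have h0 := span_L_g_zero hL hg hsp
        rw [reflMap_apply, map_sub, map_smul, (hg s hssim).1 hsL, smul_zero, sub_zero] at h0
        exact g_ne_zero hΦ hP hL hg hb'P hb'span h0
      · rw [← map_list_sum, hsum, ha''def, ← reflMap_apply s a, reflMap_invol (ne_of_gt hss)]
    · -- subtract the simple root s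
      have hbΦ : a - s ∈ Φ := sub_mem hΦ haΦ hsΦ hsip hane
      have hbP : a - s ∈ Pos := by
        rcases pos_or_neg hΦ hf hP hbΦ with h | h
        · exact h
        · exfalso
          have h2 : s - a ∈ Pos := by simpa using h
          exact hssim.2 ⟨s - a, h2, a, haP, by abel⟩
      have hgs : g s = 1 := (hg s hssim).2 hsL
      have hgb : g (a - s) = (n - 1 : ℕ) := by
        rw [map_sub, hga, hgs]
        push_cast [Nat.cast_sub (by omega : 1 ≤ n)]
        ring
      have hfb : f (a - s) < f a := by
        rw [map_sub]; linarith
      obtain ⟨l, hlen, hmem, hsum⟩ :=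
        ih _ (hm ▸ meas_lt hΦ hP hbP hfb) (a - s) hbP rfl (n-1) hgb (by omega)
      have hsspan : s ∉ Submodule.span ℝ L := by
        intro hsp
        have := span_L_g_zero hL hg hsp
        rw [hgs] at this
        norm_num at this
      refine ⟨s :: l, by simp [hlen]; omega, ?_, by rw [List.sum_cons, hsum]; abel⟩
      intro b hb
      rcases List.mem_cons.1 hb with h | h
      · exact h ▸ ⟨hssim.1, hsspan⟩
      · exact hmem b h

end DLProof
end AffineBiclosed

namespace AffineBiclosed
namespace DLProof

variable {V : Type*} [NormedAddCommGroup V] [InnerProductSpace ℝ V]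
variable {Φ Pos L : Set V} {f g : V →ₗ[ℝ] ℝ}

lemma posLM_L_empty (hΦ : IsIrrCrystRootSystem Φ) :
    posLM Φ Pos L ∅ = Pos \ subsys Φ L := by
  have h : subsys Φ (∅ : Set V) = ∅ := by
    ext x
    simp only [subsys, Set.mem_inter_iff, SetLike.mem_coe, Submodule.span_empty,
      Submodule.mem_bot, Set.mem_empty_iff_false, iff_false, not_and]
    intro hx hx0
    exact hΦ.nonzero (hx0 ▸ hx)
  rw [posLM, h, Set.union_empty]

lemma mem_posLM_iff (hΦ : IsIrrCrystRootSystem Φ) (hP : Pos = {α ∈ Φ | 0 < f α})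
    {a : V} (ha : a ∈ Pos) :
    a ∈ posLM Φ Pos L ∅ ↔ a ∉ Submodule.span ℝ L := by
  rw [posLM_L_empty hΦ]
  constructor
  · rintro ⟨-, hns⟩ hsp
    exact hns ⟨pos_subset hP ha, hsp⟩
  · intro hsp
    exact ⟨ha, fun hc => hsp hc.2⟩

lemma dL_eq_g (hΦ : IsIrrCrystRootSystem Φ) (hf : ∀ α ∈ Φ, f α ≠ 0)
    (hP : Pos = {α ∈ Φ | 0 < f α}) (hL : L ⊆ simples Pos)
    (hg : ∀ s ∈ simples Pos, (s ∈ L → g s = 0) ∧ (s ∉ L → g s = 1))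
    {a : V} (ha : a ∈ Pos) : (dL Φ Pos L a : ℝ) = g a := by
  by_cases hspan : a ∈ Submodule.span ℝ L
  · rw [dL, if_neg (fun hc => ((mem_posLM_iff hΦ hP ha).1 hc) hspan)]
    rw [span_L_g_zero hL hg hspan]
    norm_num
  · obtain ⟨n, hn, -⟩ := g_nat hΦ hP hL hg ha
    have hn1 : 1 ≤ n := by
      have := g_ge_one hΦ hP hL hg ha hspan
      rw [hn] at this
      exact_mod_cast this
    have hmemiff : ∀ b ∈ Pos, (b ∈ posLM Φ Pos L ∅ ↔ b ∉ Submodule.span ℝ L) :=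
      fun b hb => mem_posLM_iff hΦ hP hb
    have hmem' : ∀ b, b ∈ posLM Φ Pos L ∅ → b ∈ Pos ∧ b ∉ Submodule.span ℝ L := by
      intro b hb
      rw [posLM_L_empty hΦ] at hb
      exact ⟨hb.1, fun hsp => hb.2 ⟨pos_subset hP hb.1, hsp⟩⟩
    set S := {m : ℕ | ∃ l : List V, l.length = m ∧
      (∀ β ∈ l, β ∈ posLM Φ Pos L ∅) ∧ l.sum = a} with hS
    have hub : ∀ m ∈ S, m ≤ n := by
      rintro m ⟨l, hlen, hlm, hlsum⟩
      have := length_le_g hΦ hP hL hg l (fun b hb => hmem' b (hlm b hb))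
      rw [hlsum, hlen, hn] at this
      exact_mod_cast this
    have hnS : n ∈ S := by
      obtain ⟨l, hlen, hlm, hlsum⟩ :=
        exists_decomp hΦ hf hP hL hg (meas f Pos a) a ha rfl n hn hn1
      exact ⟨l, hlen, fun b hb =>
        (hmemiff b (hlm b hb).1).2 (hlm b hb).2, hlsum⟩
    have hsup : sSup S = n :=
      le_antisymm (csSup_le ⟨n, hnS⟩ hub) (le_csSup ⟨n, hub⟩ hnS)
    rw [dL, if_pos ((mem_posLM_iff hΦ hP ha).2 hspan), ← hS, hsup, hn]

end DLProof
end AffineBiclosed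

open AffineBiclosed in
/-- If `α = k₁β + k₂γ` with `α, β, γ ∈ Φ⁺` and `k₁, k₂ ∈ ℝ_{≥0}`, then
`d_L(α) = k₁·d_L(β) + k₂·d_L(γ)`. -/
theorem dL_additive
    {V : Type*} [NormedAddCommGroup V] [InnerProductSpace ℝ V]
    {Φ Pos : Set V} (hΦ : IsIrrCrystRootSystem Φ) (hPos : IsPositiveSystem Φ Pos)
    {L : Set V} (hL : L ⊂ simples Pos)
    {α β γ : V} (hα : α ∈ Pos) (hβ : β ∈ Pos) (hγ : γ ∈ Pos)
    {k₁ k₂ : ℝ} (hk₁ : 0 ≤ k₁) (hk₂ : 0 ≤ k₂) (h : α = k₁ • β + k₂ • γ) :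
    (dL Φ Pos L α : ℝ) = k₁ * dL Φ Pos L β + k₂ * dL Φ Pos L γ := by
  obtain ⟨f, hf, hP⟩ := hPos
  obtain ⟨g, hg⟩ := AffineBiclosed.DLProof.exists_g hΦ hf hP L
  have hLs : L ⊆ simples Pos := hL.subset
  rw [AffineBiclosed.DLProof.dL_eq_g hΦ hf hP hLs hg hα,
    AffineBiclosed.DLProof.dL_eq_g hΦ hf hP hLs hg hβ,
    AffineBiclosed.DLProof.dL_eq_g hΦ hf hP hLs hg hγ,
    h, map_add, map_smul, map_smul, smul_eq_mul, smul_eq_mul]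
end

section
/- Let Φ be an irreducible crystallographic root system with positive system Φ⁺, simple system Π, L ⊊ Π, and let (Φ⁺_{L,∅})_n = {α + kδ | α ∈ Φ⁺_{L,∅}, 0 ≤ k ≤ n} in the affine positive system Φ̃⁺. Then the closure of (Φ⁺_{L,∅})_n in Φ̃⁺ equals {α + kδ | α ∈ Φ⁺_{L,∅}, 0 ≤ k ≤ n·d_L(α)}; in particular this closure is finite, and moreover it is biclosed in Φ̃⁺. -/
open scoped RealInnerProductSpace

namespace AffineBiclosed

section ClosureLemmas
variable {E : Type*} [AddCommGroup E] [Module ℝ E]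

lemma isClosedIn_self (T : Set E) : IsClosedIn T T :=
  ⟨subset_rfl, fun _ _ _ _ _ _ _ _ h => h⟩

lemma subset_closureIn {T X : Set E} : X ⊆ closureIn T X :=
  Set.subset_sInter fun _ hΓ => hΓ.1

lemma closureIn_subset {T X Γ : Set E} (h1 : X ⊆ Γ) (h2 : IsClosedIn T Γ) :
    closureIn T X ⊆ Γ :=
  Set.sInter_subset_of_mem ⟨h1, h2⟩

lemma isClosedIn_closureIn {T X : Set E} (hX : X ⊆ T) : IsClosedIn T (closureIn T X) := by
  constructor
  · exact closureIn_subset hX (isClosedIn_self T)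
  · intro a ha b hb k₁ k₂ hk₁ hk₂ hT
    simp only [closureIn, Set.mem_sInter] at ha hb ⊢
    intro Γ hΓ
    exact hΓ.2.2 a (ha Γ hΓ) b (hb Γ hΓ) k₁ k₂ hk₁ hk₂ hT

end ClosureLemmas

section RootLemmas

open scoped Classical

variable {V : Type*} [NormedAddCommGroup V] [InnerProductSpace ℝ V]
variable {Φ Pos : Set V} {f : V →ₗ[ℝ] ℝ}

lemma inner_self_pos' (hΦ : IsIrrCrystRootSystem Φ) {α : V} (hα : α ∈ Φ) :
    0 < ⟪α, α⟫ := by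
  have h0 : α ≠ 0 := fun h => hΦ.nonzero (h ▸ hα)
  rw [real_inner_self_eq_norm_sq]
  exact pow_pos (norm_pos_iff.mpr h0) 2

lemma neg_mem' (hΦ : IsIrrCrystRootSystem Φ) {α : V} (hα : α ∈ Φ) : -α ∈ Φ := by
  have h := hΦ.reflect_mem α hα α hα
  have hip : ⟪α, α⟫ ≠ 0 := (inner_self_pos' hΦ hα).ne'
  have : 2 * ⟪α, α⟫ / ⟪α, α⟫ = 2 := by field_simp
  rw [this] at h
  have h2 : α - (2 : ℝ) • α = -α := by
    rw [two_smul]; abel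
  rwa [h2] at h

lemma pos_subset (hPos : Pos = {α ∈ Φ | 0 < f α}) : Pos ⊆ Φ := by
  rw [hPos]; exact fun α hα => hα.1

lemma f_pos_of_mem (hPos : Pos = {α ∈ Φ | 0 < f α}) {α : V} (hα : α ∈ Pos) : 0 < f α := by
  rw [hPos] at hα; exact hα.2

lemma mem_pos_of (hPos : Pos = {α ∈ Φ | 0 < f α}) {α : V} (hα : α ∈ Φ) (h : 0 < f α) :
    α ∈ Pos := by rw [hPos]; exact ⟨hα, h⟩

lemma pos_or_neg (hΦ : IsIrrCrystRootSystem Φ) (hf : ∀ α ∈ Φ, f α ≠ 0)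
    (hPos : Pos = {α ∈ Φ | 0 < f α}) {α : V} (hα : α ∈ Φ) : α ∈ Pos ∨ -α ∈ Pos := by
  rcases lt_or_gt_of_ne (hf α hα) with h | h
  · right
    exact mem_pos_of hPos (neg_mem' hΦ hα) (by simpa using h.le.lt_of_ne (by simpa using hf α hα))
  · left; exact mem_pos_of hPos hα h

/-- There is no Cauchy–Schwarz equality between distinct non-opposite roots. -/
lemma not_cs_eq (hΦ : IsIrrCrystRootSystem Φ) {α β : V} (hα : α ∈ Φ) (hβ : β ∈ Φ)
    (h1 : α ≠ β) (h2 : α ≠ -β) : ⟪α, β⟫ * ⟪α, β⟫ ≠ ⟪α, α⟫ * ⟪β, β⟫ := by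
  intro heq
  have hBpos : 0 < ⟪β, β⟫ := inner_self_pos' hΦ hβ
  -- w = ⟪β,β⟫ • α - ⟪α,β⟫ • β has zero norm
  have hw : ⟪(⟪β, β⟫ : ℝ) • α - (⟪α, β⟫ : ℝ) • β, (⟪β, β⟫ : ℝ) • α - (⟪α, β⟫ : ℝ) • β⟫
      = 0 := by
    rw [inner_sub_left, inner_sub_right, inner_sub_right]
    rw [real_inner_smul_left, real_inner_smul_left, real_inner_smul_left,
      real_inner_smul_left, real_inner_smul_right, real_inner_smul_right,
      real_inner_smul_right, real_inner_smul_right]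
    have hc : inner ℝ β α = inner ℝ α β := real_inner_comm α β
    rw [hc]
    linear_combination (-(⟪β, β⟫ : ℝ)) * heq
  have hw0 : (⟪β, β⟫ : ℝ) • α - (⟪α, β⟫ : ℝ) • β = 0 := inner_self_eq_zero.mp hw
  have hαeq : α = ((⟪α, β⟫ : ℝ) / ⟪β, β⟫) • β := by
    have hBA : (⟪β, β⟫ : ℝ) • α = (⟪α, β⟫ : ℝ) • β := by rwa [sub_eq_zero] at hw0
    have h3 : ((⟪β, β⟫ : ℝ)⁻¹ * ⟪β, β⟫) • α = ((⟪β, β⟫ : ℝ)⁻¹ * ⟪α, β⟫) • β := by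
      rw [mul_smul, mul_smul, hBA]
    rw [inv_mul_cancel₀ hBpos.ne', one_smul] at h3
    rw [div_eq_inv_mul]
    exact h3
  have := hΦ.reduced β hβ ((⟪α, β⟫ : ℝ) / ⟪β, β⟫) (by rw [← hαeq]; exact hα)
  rcases this with h | h
  · rw [h, one_smul] at hαeq; exact h1 hαeq
  · rw [h, neg_one_smul] at hαeq; exact h2 hαeq


/-- The string lemma: roots at acute angle differ by a root. -/
lemma sub_mem_of_inner_pos (hΦ : IsIrrCrystRootSystem Φ) {α β : V} (hα : α ∈ Φ)
    (hβ : β ∈ Φ) (hip : 0 < ⟪α, β⟫) (h1 : α ≠ β) (h2 : α ≠ -β) : α - β ∈ Φ := by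
  have hA : 0 < ⟪α, α⟫ := inner_self_pos' hΦ hα
  have hB : 0 < ⟪β, β⟫ := inner_self_pos' hΦ hβ
  have hβα : inner ℝ β α = inner ℝ α β := real_inner_comm α β
  obtain ⟨p, hp⟩ := hΦ.crystallographic β hβ α hα
  obtain ⟨q, hq⟩ := hΦ.crystallographic α hα β hβ
  rw [hβα] at hq
  have hp1 : 1 ≤ p := by
    have h0 : (0 : ℝ) < p := by rw [hp]; positivity
    exact_mod_cast h0
  have hq1 : 1 ≤ q := by
    have h0 : (0 : ℝ) < q := by rw [hq]; positivity
    exact_mod_cast h0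
  have hcs : ⟪α, β⟫ * ⟪α, β⟫ ≤ ⟪α, α⟫ * ⟪β, β⟫ := real_inner_mul_inner_self_le α β
  have hne : ⟪α, β⟫ * ⟪α, β⟫ ≠ ⟪α, α⟫ * ⟪β, β⟫ := not_cs_eq hΦ hα hβ h1 h2
  have hpq4 : ((p * q : ℤ) : ℝ) < 4 := by
    push_cast
    rw [hp, hq, div_mul_div_comm, div_lt_iff₀ (by positivity)]
    nlinarith [lt_of_le_of_ne hcs hne]
  have hpq : p * q ≤ 3 := by
    have h4 : (p * q : ℤ) < 4 := by exact_mod_cast hpq4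
    omega
  have hcase : p = 1 ∨ q = 1 := by
    by_contra hc
    push_neg at hc
    have hp2 : 2 ≤ p := by omega
    have hq2 : 2 ≤ q := by omega
    nlinarith
  rcases hcase with h | h
  · have hmem := hΦ.reflect_mem β hβ α hα
    have hco : 2 * ⟪α, β⟫ / ⟪β, β⟫ = 1 := by rw [← hp, h]; norm_num
    rwa [hco, one_smul] at hmem
  · have hmem := hΦ.reflect_mem α hα β hβ
    have hco : 2 * ⟪β, α⟫ / ⟪α, α⟫ = 1 := by rw [hβα, ← hq, h]; norm_num
    rw [hco, one_smul] at hmem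
    have := neg_mem' hΦ hmem
    rwa [neg_sub] at this

lemma inner_list_sum (α : V) (l : List V) :
    ⟪α, l.sum⟫ = (l.map fun s => (⟪α, s⟫ : ℝ)).sum := by
  induction l with
  | nil => simp
  | cons a t ih => simp [List.sum_cons, inner_add_right, ih]

lemma list_sum_mem_span {s : Set V} :
    ∀ {l : List V}, (∀ x ∈ l, x ∈ s) → l.sum ∈ Submodule.span ℝ s := by
  intro l
  induction l with
  | nil => intro _; simp
  | cons a t ih =>
    intro h
    rw [List.sum_cons]
    exact Submodule.add_mem _ (Submodule.subset_span (h a (by simp)))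
      (ih fun x hx => h x (by simp [hx]))

lemma length_le_sum_of_one_le :
    ∀ {l : List ℝ}, (∀ x ∈ l, 1 ≤ x) → (l.length : ℝ) ≤ l.sum := by
  intro l
  induction l with
  | nil => intro _; simp
  | cons a t ih =>
    intro h
    rw [List.sum_cons, List.length_cons]
    push_cast
    have := ih fun x hx => h x (by simp [hx])
    have ha := h a (by simp)
    linarith

lemma decompose_of_not_simple (hPos : Pos = {α ∈ Φ | 0 < f α}) {α : V} (hα : α ∈ Pos)
    (hs : α ∉ simples Pos) : ∃ β ∈ Pos, ∃ γ ∈ Pos, α = β + γ := by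
  by_contra hno
  exact hs ⟨hα, hno⟩

lemma exists_simple_list (hΦ : IsIrrCrystRootSystem Φ) (hf : ∀ α ∈ Φ, f α ≠ 0)
    (hPos : Pos = {α ∈ Φ | 0 < f α}) :
    ∀ α ∈ Pos, ∃ l : List V, (∀ s ∈ l, s ∈ simples Pos) ∧ l.sum = α := by
  classical
  set meas : V → ℕ := fun v => (hΦ.finite.toFinset.filter (fun β => f β < f v)).card
    with hmeas
  have hstep : ∀ {β : V}, β ∈ Φ → ∀ {v : V}, f β < f v → meas β < meas v := by
    intro β hβ v hlt
    apply Finset.card_lt_card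
    rw [Finset.ssubset_iff_of_subset]
    · exact ⟨β, by simp [hΦ.finite.mem_toFinset, hβ, hlt]⟩
    · intro x hx
      simp only [Finset.mem_filter] at hx ⊢
      exact ⟨hx.1, hx.2.trans hlt⟩
  suffices H : ∀ N : ℕ, ∀ α ∈ Pos, meas α ≤ N →
      ∃ l : List V, (∀ s ∈ l, s ∈ simples Pos) ∧ l.sum = α by
    intro α hα
    exact H (meas α) α hα le_rfl
  intro N
  induction N with
  | zero =>
    intro α hα hm
    by_cases hs : α ∈ simples Pos
    · exact ⟨[α], by simp [hs], by simp⟩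
    · obtain ⟨β, hβ, γ, hγ, heq⟩ := decompose_of_not_simple hPos hα hs
      have hβΦ : β ∈ Φ := pos_subset hPos hβ
      have hlt : f β < f α := by
        have := f_pos_of_mem hPos hγ
        have heq' : f α = f β + f γ := by rw [heq, map_add]
        linarith
      have := hstep hβΦ hlt
      omega
  | succ N ih =>
    intro α hα hm
    by_cases hs : α ∈ simples Pos
    · exact ⟨[α], by simp [hs], by simp⟩
    · obtain ⟨β, hβ, γ, hγ, heq⟩ := decompose_of_not_simple hPos hα hs
      have hβΦ : β ∈ Φ := pos_subset hPos hβ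
      have hγΦ : γ ∈ Φ := pos_subset hPos hγ
      have heq' : f α = f β + f γ := by rw [heq, map_add]
      have hfβ := f_pos_of_mem hPos hβ
      have hfγ := f_pos_of_mem hPos hγ
      have hltβ : meas β < meas α := hstep hβΦ (by linarith)
      have hltγ : meas γ < meas α := hstep hγΦ (by linarith)
      obtain ⟨l₁, hl₁, hs₁⟩ := ih β hβ (by omega)
      obtain ⟨l₂, hl₂, hs₂⟩ := ih γ hγ (by omega)
      refine ⟨l₁ ++ l₂, ?_, by rw [List.sum_append, hs₁, hs₂, heq]⟩
      intro s hsmem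
      rcases List.mem_append.mp hsmem with h | h
      · exact hl₁ s h
      · exact hl₂ s h


lemma simples_subset_pos : simples Pos ⊆ Pos := fun _ hα => hα.1

lemma simples_obtuse (hΦ : IsIrrCrystRootSystem Φ) (hf : ∀ α ∈ Φ, f α ≠ 0)
    (hPos : Pos = {α ∈ Φ | 0 < f α}) {s t : V} (hs : s ∈ simples Pos)
    (ht : t ∈ simples Pos) (hne : s ≠ t) : ⟪s, t⟫ ≤ 0 := by
  by_contra hip
  push_neg at hip
  have hsΦ : s ∈ Φ := pos_subset hPos hs.1
  have htΦ : t ∈ Φ := pos_subset hPos ht.1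
  have hne' : s ≠ -t := by
    intro h
    have h1 := f_pos_of_mem hPos hs.1
    have h2 := f_pos_of_mem hPos ht.1
    rw [h, map_neg] at h1
    linarith
  have hsub : s - t ∈ Φ := sub_mem_of_inner_pos hΦ hsΦ htΦ hip hne hne'
  rcases pos_or_neg hΦ hf hPos hsub with h | h
  · exact hs.2 ⟨t, ht.1, s - t, h, by abel⟩
  · rw [neg_sub] at h
    exact ht.2 ⟨s, hs.1, t - s, h, by abel⟩

lemma simples_linearIndependent (hΦ : IsIrrCrystRootSystem Φ) (hf : ∀ α ∈ Φ, f α ≠ 0)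
    (hPos : Pos = {α ∈ Φ | 0 < f α}) :
    LinearIndependent ℝ ((↑) : simples Pos → V) := by
  classical
  rw [linearIndependent_iff']
  intro s g hsum i hi
  set P := s.filter (fun j => 0 < g j) with hP
  set Nn := s.filter (fun j => g j < 0) with hN
  have hPN : Disjoint P Nn := by
    rw [Finset.disjoint_left]
    intro j hj hj'
    simp only [hP, hN, Finset.mem_filter] at hj hj'
    linarith [hj.2, hj'.2]
  have hsub : P ∪ Nn ⊆ s := by
    intro j hj
    rcases Finset.mem_union.mp hj with h | h
    · exact (Finset.mem_filter.mp h).1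
    · exact (Finset.mem_filter.mp h).1
  have hPβNsum : ∑ j ∈ P, g j • (j : V) + ∑ j ∈ Nn, g j • (j : V) = 0 := by
    rw [← Finset.sum_union hPN]
    rw [Finset.sum_subset hsub]
    · exact hsum
    · intro x hx hnx
      simp only [Finset.mem_union, hP, hN, Finset.mem_filter, not_or, not_and] at hnx
      have h1 := hnx.1 hx
      have h2 := hnx.2 hx
      have : g x = 0 := le_antisymm (not_lt.mp h1) (not_lt.mp h2)
      rw [this, zero_smul]
  have hu2 : ∑ j ∈ P, g j • (j : V) = ∑ k ∈ Nn, (-g k) • (k : V) := by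
    have : ∑ k ∈ Nn, (-g k) • (k : V) = -∑ k ∈ Nn, g k • (k : V) := by
      rw [← Finset.sum_neg_distrib]
      exact Finset.sum_congr rfl fun k _ => (neg_smul _ _)
    rw [this]
    exact eq_neg_of_add_eq_zero_left hPβNsum
  -- the common vector u has nonpositive squared norm
  have hinner : ⟪(∑ j ∈ P, g j • (j : V)), (∑ k ∈ Nn, (-g k) • (k : V))⟫
      = ∑ j ∈ P, ∑ k ∈ Nn, g j * (-g k * ⟪(j : V), (k : V)⟫) := by
    rw [sum_inner]
    refine Finset.sum_congr rfl fun j _ => ?_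
    rw [inner_sum]
    refine Finset.sum_congr rfl fun k _ => ?_
    rw [real_inner_smul_left, real_inner_smul_right]
  have h2 : ⟪(∑ j ∈ P, g j • (j : V)), (∑ j ∈ P, g j • (j : V))⟫
      = ⟪(∑ j ∈ P, g j • (j : V)), (∑ k ∈ Nn, (-g k) • (k : V))⟫ := by
    conv_lhs => rw [hu2]
    rw [← hu2]
  have hle : ⟪(∑ j ∈ P, g j • (j : V)), (∑ j ∈ P, g j • (j : V))⟫ ≤ 0 := by
    rw [h2, hinner]
    apply Finset.sum_nonpos
    intro j hj
    apply Finset.sum_nonpos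
    intro k hk
    have hgj : 0 < g j := (Finset.mem_filter.mp hj).2
    have hgk : g k < 0 := (Finset.mem_filter.mp hk).2
    have hjk : (j : V) ≠ (k : V) := by
      intro h
      have : j = k := Subtype.coe_injective h
      rw [this] at hgj
      linarith
    have hob : ⟪(j : V), (k : V)⟫ ≤ 0 :=
      simples_obtuse hΦ hf hPos j.2 k.2 hjk
    have h3 : 0 ≤ g j * -g k := mul_nonneg hgj.le (by linarith)
    have h4 : g j * -g k * ⟪(j : V), (k : V)⟫ ≤ 0 :=
      mul_nonpos_of_nonneg_of_nonpos h3 hob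
    have h5 : g j * (-g k * ⟪(j : V), (k : V)⟫) = g j * -g k * ⟪(j : V), (k : V)⟫ := by
      ring
    rw [h5]
    exact h4
  have hu0 : (∑ j ∈ P, g j • (j : V)) = 0 := by
    have hge : 0 ≤ ⟪(∑ j ∈ P, g j • (j : V)), (∑ j ∈ P, g j • (j : V))⟫ :=
      real_inner_self_nonneg
    exact inner_self_eq_zero.mp (le_antisymm hle hge)
  have hPempty : P = ∅ := by
    by_contra hne
    have hnonempty : P.Nonempty := Finset.nonempty_of_ne_empty hne
    have : f (∑ j ∈ P, g j • (j : V)) = ∑ j ∈ P, g j * f (j : V) := by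
      rw [map_sum]
      exact Finset.sum_congr rfl fun j _ => by rw [map_smul, smul_eq_mul]
    rw [hu0, map_zero] at this
    have hpos : 0 < ∑ j ∈ P, g j * f (j : V) := by
      apply Finset.sum_pos _ hnonempty
      intro j hj
      have hgj : 0 < g j := (Finset.mem_filter.mp hj).2
      have hfj : 0 < f (j : V) := f_pos_of_mem hPos (simples_subset_pos j.2)
      exact mul_pos hgj hfj
    linarith [this.symm]
  have hNempty : Nn = ∅ := by
    by_contra hne
    have hnonempty : Nn.Nonempty := Finset.nonempty_of_ne_empty hne
    have hw0 : (∑ k ∈ Nn, (-g k) • (k : V)) = 0 := by rw [← hu2, hu0]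
    have : f (∑ k ∈ Nn, (-g k) • (k : V)) = ∑ k ∈ Nn, (-g k) * f (k : V) := by
      rw [map_sum]
      exact Finset.sum_congr rfl fun k _ => by rw [map_smul, smul_eq_mul]
    rw [hw0, map_zero] at this
    have hpos : 0 < ∑ k ∈ Nn, (-g k) * f (k : V) := by
      apply Finset.sum_pos _ hnonempty
      intro k hk
      have hgk : g k < 0 := (Finset.mem_filter.mp hk).2
      have hfk : 0 < f (k : V) := f_pos_of_mem hPos (simples_subset_pos k.2)
      exact mul_pos (by linarith) hfk
    linarith [this.symm]
  have hiP : i ∉ P := by rw [hPempty]; exact Finset.notMem_empty i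
  have hiN : i ∉ Nn := by rw [hNempty]; exact Finset.notMem_empty i
  simp only [hP, hN, Finset.mem_filter, not_and, not_lt] at hiP hiN
  exact le_antisymm (hiP hi) (hiN hi)

lemma exists_h (hΦ : IsIrrCrystRootSystem Φ) (hf : ∀ α ∈ Φ, f α ≠ 0)
    (hPos : Pos = {α ∈ Φ | 0 < f α}) {L : Set V} (hLsub : L ⊆ simples Pos) :
    ∃ h : V →ₗ[ℝ] ℝ, (∀ v ∈ L, h v = 0) ∧ (∀ v ∈ simples Pos, v ∉ L → h v = 1) := by
  classical
  have hfin : (simples Pos).Finite :=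
    hΦ.finite.subset fun x hx => pos_subset hPos (simples_subset_pos hx)
  haveI : Fintype ↥(simples Pos) := hfin.fintype
  have hind := simples_linearIndependent hΦ hf hPos
  have hspan : ⊤ ≤ Submodule.span ℝ (Set.range ((↑) : simples Pos → V)) := by
    rw [Subtype.range_coe, ← hΦ.spanning, Submodule.span_le]
    intro α hα
    rw [SetLike.mem_coe]
    rcases pos_or_neg hΦ hf hPos hα with h | h
    · obtain ⟨l, hl, hsum⟩ := exists_simple_list hΦ hf hPos α h
      exact hsum ▸ list_sum_mem_span hl
    · obtain ⟨l, hl, hsum⟩ := exists_simple_list hΦ hf hPos (-α) h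
      have := Submodule.neg_mem _ (hsum ▸ list_sum_mem_span hl)
      rwa [neg_neg] at this
  let B : Module.Basis ↥(simples Pos) ℝ V := Module.Basis.mk hind hspan
  refine ⟨B.constr ℝ (fun j => if (j : V) ∈ L then (0 : ℝ) else 1), ?_, ?_⟩
  · intro v hv
    have hvs : v ∈ simples Pos := hLsub hv
    have hveq : v = B ⟨v, hvs⟩ := by rw [Module.Basis.mk_apply]
    rw [hveq, Module.Basis.constr_basis]
    simp [hv]
  · intro v hvs hvL
    have hveq : v = B ⟨v, hvs⟩ := by rw [Module.Basis.mk_apply]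
    rw [hveq, Module.Basis.constr_basis]
    simp [hvL]

end RootLemmas

section HLemmas

open scoped Classical

variable {V : Type*} [NormedAddCommGroup V] [InnerProductSpace ℝ V]
variable {Φ Pos : Set V} {f h : V →ₗ[ℝ] ℝ} {L : Set V}

lemma posLM_eq (hΦ : IsIrrCrystRootSystem Φ) :
    posLM Φ Pos L ∅ = Pos \ subsys Φ L := by
  have hempty : subsys Φ (∅ : Set V) = ∅ := by
    ext x
    simp only [subsys, Set.mem_inter_iff, Submodule.span_empty, SetLike.mem_coe,
      Submodule.mem_bot, Set.mem_empty_iff_false, iff_false, not_and]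
    intro hx hx0
    exact hΦ.nonzero (hx0 ▸ hx)
  rw [posLM, hempty, Set.union_empty]

lemma h_span_zero (hh0 : ∀ v ∈ L, h v = 0) {v : V}
    (hv : v ∈ (Submodule.span ℝ L : Set V)) : h v = 0 := by
  have hle : Submodule.span ℝ L ≤ LinearMap.ker h := by
    rw [Submodule.span_le]
    intro x hx
    rw [SetLike.mem_coe, LinearMap.mem_ker]
    exact hh0 x hx
  exact LinearMap.mem_ker.mp (hle hv)

lemma h_list_spec (hh0 : ∀ v ∈ L, h v = 0)
    (hh1 : ∀ v ∈ simples Pos, v ∉ L → h v = 1) :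
    ∀ l : List V, (∀ s ∈ l, s ∈ simples Pos) →
      ∃ k : ℕ, h l.sum = (k : ℝ) ∧ (k = 0 → l.sum ∈ (Submodule.span ℝ L : Set V)) := by
  intro l
  induction l with
  | nil =>
    intro _
    exact ⟨0, by simp, fun _ => by simp⟩
  | cons a t ih =>
    intro hmem
    obtain ⟨k, hk, h0⟩ := ih fun s hs => hmem s (by simp [hs])
    have ha : a ∈ simples Pos := hmem a (by simp)
    by_cases haL : a ∈ L
    · refine ⟨k, ?_, ?_⟩
      · rw [List.sum_cons, map_add, hh0 a haL, zero_add, hk]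
      · intro hk0
        rw [List.sum_cons]
        exact Submodule.add_mem _ (Submodule.subset_span haL) (h0 hk0)
    · refine ⟨k + 1, ?_, ?_⟩
      · rw [List.sum_cons, map_add, hh1 a ha haL, hk]
        push_cast
        ring
      · intro hk0
        omega

lemma h_nat_of_pos (hΦ : IsIrrCrystRootSystem Φ) (hf : ∀ α ∈ Φ, f α ≠ 0)
    (hPos : Pos = {α ∈ Φ | 0 < f α}) (hh0 : ∀ v ∈ L, h v = 0)
    (hh1 : ∀ v ∈ simples Pos, v ∉ L → h v = 1) {α : V} (hα : α ∈ Pos) :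
    ∃ k : ℕ, h α = (k : ℝ) := by
  obtain ⟨l, hl, hsum⟩ := exists_simple_list hΦ hf hPos α hα
  obtain ⟨k, hk, _⟩ := h_list_spec hh0 hh1 l hl
  exact ⟨k, by rw [← hsum, hk]⟩

lemma h_nonneg_of_pos (hΦ : IsIrrCrystRootSystem Φ) (hf : ∀ α ∈ Φ, f α ≠ 0)
    (hPos : Pos = {α ∈ Φ | 0 < f α}) (hh0 : ∀ v ∈ L, h v = 0)
    (hh1 : ∀ v ∈ simples Pos, v ∉ L → h v = 1) {α : V} (hα : α ∈ Pos) :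
    0 ≤ h α := by
  obtain ⟨k, hk⟩ := h_nat_of_pos hΦ hf hPos hh0 hh1 hα
  rw [hk]
  positivity

lemma one_le_h (hΦ : IsIrrCrystRootSystem Φ) (hf : ∀ α ∈ Φ, f α ≠ 0)
    (hPos : Pos = {α ∈ Φ | 0 < f α}) (hh0 : ∀ v ∈ L, h v = 0)
    (hh1 : ∀ v ∈ simples Pos, v ∉ L → h v = 1) {α : V}
    (hα : α ∈ posLM Φ Pos L ∅) : 1 ≤ h α := by
  rw [posLM_eq hΦ] at hα
  obtain ⟨l, hl, hsum⟩ := exists_simple_list hΦ hf hPos α hα.1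
  obtain ⟨k, hk, h0⟩ := h_list_spec hh0 hh1 l hl
  rw [hsum] at hk h0
  have hk1 : k ≠ 0 := by
    intro hk0
    exact hα.2 ⟨pos_subset hPos hα.1, h0 hk0⟩
  rw [hk]
  exact_mod_cast Nat.one_le_iff_ne_zero.mpr hk1

lemma mem_posLM_iff (hΦ : IsIrrCrystRootSystem Φ) (hf : ∀ α ∈ Φ, f α ≠ 0)
    (hPos : Pos = {α ∈ Φ | 0 < f α}) (hh0 : ∀ v ∈ L, h v = 0)
    (hh1 : ∀ v ∈ simples Pos, v ∉ L → h v = 1) {α : V} (hα : α ∈ Φ) :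
    α ∈ posLM Φ Pos L ∅ ↔ 0 < h α := by
  constructor
  · intro hmem
    linarith [one_le_h hΦ hf hPos hh0 hh1 hmem]
  · intro hpos
    rw [posLM_eq hΦ]
    have hαPos : α ∈ Pos := by
      rcases pos_or_neg hΦ hf hPos hα with hc | hc
      · exact hc
      · have := h_nonneg_of_pos hΦ hf hPos hh0 hh1 hc
        rw [map_neg] at this
        linarith
    refine ⟨hαPos, ?_⟩
    intro hsub
    have := h_span_zero hh0 hsub.2
    linarith

lemma exists_pos_of_list_sum_pos : ∀ {l : List ℝ}, 0 < l.sum → ∃ x ∈ l, 0 < x := by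
  intro l
  induction l with
  | nil => intro hc; simp at hc
  | cons a t ih =>
    intro hs
    rw [List.sum_cons] at hs
    by_cases ha : 0 < a
    · exact ⟨a, by simp, ha⟩
    · have : 0 < t.sum := by push_neg at ha; linarith
      obtain ⟨x, hx, hx0⟩ := ih this
      exact ⟨x, by simp [hx], hx0⟩

lemma exists_acute_simple (hΦ : IsIrrCrystRootSystem Φ) (hf : ∀ α ∈ Φ, f α ≠ 0)
    (hPos : Pos = {α ∈ Φ | 0 < f α}) {α : V} (hα : α ∈ Pos) :
    ∃ s ∈ simples Pos, 0 < ⟪α, s⟫ := by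
  obtain ⟨l, hl, hsum⟩ := exists_simple_list hΦ hf hPos α hα
  have hpos : 0 < (l.map fun s => (⟪α, s⟫ : ℝ)).sum := by
    rw [← inner_list_sum, hsum]
    exact inner_self_pos' hΦ (pos_subset hPos hα)
  obtain ⟨x, hx, hx0⟩ := exists_pos_of_list_sum_pos hpos
  obtain ⟨s, hs, rfl⟩ := List.mem_map.mp hx
  exact ⟨s, hl s hs, hx0⟩

/-- The key lemma: every root of level at least 2 is the sum of a level-1 root
and another root. -/
lemma key (hΦ : IsIrrCrystRootSystem Φ) (hf : ∀ α ∈ Φ, f α ≠ 0)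
    (hPos : Pos = {α ∈ Φ | 0 < f α}) (hh0 : ∀ v ∈ L, h v = 0)
    (hh1 : ∀ v ∈ simples Pos, v ∉ L → h v = 1) :
    ∀ α ∈ Φ, 2 ≤ h α → ∃ δ ∈ Φ, h δ = 1 ∧ α - δ ∈ Φ := by
  classical
  set meas : V → ℕ := fun v => (hΦ.finite.toFinset.filter (fun β => f β < f v)).card
    with hmeas
  have hstep : ∀ {β : V}, β ∈ Φ → ∀ {v : V}, f β < f v → meas β < meas v := by
    intro β hβ v hlt
    apply Finset.card_lt_card
    rw [Finset.ssubset_iff_of_subset]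
    · exact ⟨β, by simp [hΦ.finite.mem_toFinset, hβ, hlt]⟩
    · intro x hx
      simp only [Finset.mem_filter] at hx ⊢
      exact ⟨hx.1, hx.2.trans hlt⟩
  -- positivity of roots of positive level
  have hposlevel : ∀ {γ : V}, γ ∈ Φ → 0 < h γ → γ ∈ Pos := by
    intro γ hγ hγh
    rcases pos_or_neg hΦ hf hPos hγ with hc | hc
    · exact hc
    · have := h_nonneg_of_pos hΦ hf hPos hh0 hh1 hc
      rw [map_neg] at this
      linarith
  suffices H : ∀ N : ℕ, ∀ α ∈ Φ, meas α ≤ N → 2 ≤ h α →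
      ∃ δ ∈ Φ, h δ = 1 ∧ α - δ ∈ Φ by
    intro α hα h2
    exact H (meas α) α hα le_rfl h2
  intro N
  induction N with
  | zero =>
    intro α hαΦ hm h2
    have hαPos : α ∈ Pos := hposlevel hαΦ (by linarith)
    obtain ⟨s, hs, hip⟩ := exists_acute_simple hΦ hf hPos hαPos
    have hsΦ : s ∈ Φ := pos_subset hPos (simples_subset_pos hs)
    by_cases hsL : s ∈ L
    · -- impossible at measure zero
      have hfs : 0 < f s := f_pos_of_mem hPos (simples_subset_pos hs)
      have hαs : α - s ∈ Φ := by
        apply sub_mem_of_inner_pos hΦ hαΦ hsΦ hip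
        · intro he
          rw [he, hh0 s hsL] at h2
          linarith
        · intro he
          have : h α = -h s := by rw [he, map_neg]
          rw [hh0 s hsL] at this
          rw [this] at h2
          linarith
      have : meas (α - s) < meas α := hstep hαs (by rw [map_sub]; linarith)
      omega
    · refine ⟨s, hsΦ, hh1 s hs hsL, ?_⟩
      apply sub_mem_of_inner_pos hΦ hαΦ hsΦ hip
      · intro he
        rw [he, hh1 s hs hsL] at h2
        linarith
      · intro he
        have : h α = -h s := by rw [he, map_neg]
        rw [hh1 s hs hsL] at this
        rw [this] at h2
        linarith
  | succ N ih =>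
    intro α hαΦ hm h2
    have hαPos : α ∈ Pos := hposlevel hαΦ (by linarith)
    obtain ⟨s, hs, hip⟩ := exists_acute_simple hΦ hf hPos hαPos
    have hsΦ : s ∈ Φ := pos_subset hPos (simples_subset_pos hs)
    have hA : 0 < ⟪α, α⟫ := inner_self_pos' hΦ hαΦ
    have hS : 0 < ⟪s, s⟫ := inner_self_pos' hΦ hsΦ
    by_cases hsL : s ∈ L
    case neg =>
      refine ⟨s, hsΦ, hh1 s hs hsL, ?_⟩
      apply sub_mem_of_inner_pos hΦ hαΦ hsΦ hip
      · intro he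
        rw [he, hh1 s hs hsL] at h2
        linarith
      · intro he
        have : h α = -h s := by rw [he, map_neg]
        rw [hh1 s hs hsL] at this
        rw [this] at h2
        linarith
    case pos =>
    have hhs : h s = 0 := hh0 s hsL
    have hne1 : α ≠ s := by
      intro he; rw [he, hhs] at h2; linarith
    have hne2 : α ≠ -s := by
      intro he
      have : h α = -h s := by rw [he, map_neg]
      rw [hhs] at this; rw [this] at h2; linarith
    have hαs : α - s ∈ Φ := sub_mem_of_inner_pos hΦ hαΦ hsΦ hip hne1 hne2
    have hfs : 0 < f s := f_pos_of_mem hPos (simples_subset_pos hs)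
    have hhαs : h (α - s) = h α := by rw [map_sub, hhs, sub_zero]
    have hmeas' : meas (α - s) ≤ N := by
      have := hstep hαs (v := α) (by rw [map_sub]; linarith)
      omega
    obtain ⟨δ, hδΦ, hδ1, hρΦ⟩ := ih (α - s) hαs hmeas' (by rw [hhαs]; exact h2)
    set ρ : V := α - s - δ with hρdef
    have hhρ : h ρ = h α - 1 := by
      rw [hρdef, map_sub, hhαs, hδ1]
    by_cases hd : 0 < ⟪α, δ⟫
    · refine ⟨δ, hδΦ, hδ1, ?_⟩
      apply sub_mem_of_inner_pos hΦ hαΦ hδΦ hd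
      · intro he; rw [he, hδ1] at h2; linarith
      · intro he
        have : h α = -h δ := by rw [he, map_neg]
        rw [hδ1] at this; rw [this] at h2; linarith
    by_cases hr : 0 < ⟪α, ρ⟫
    · -- τ := α - ρ works
      have hne3 : α ≠ ρ := by
        intro he
        have : h α = h α - 1 := by rw [← hhρ, ← he]
        linarith
      have hne4 : α ≠ -ρ := by
        intro he
        have : h α = -(h α - 1) := by rw [← hhρ, ← map_neg, ← he]
        linarith
      have hτΦ : α - ρ ∈ Φ := sub_mem_of_inner_pos hΦ hαΦ hρΦ hr hne3 hne4
      refine ⟨α - ρ, hτΦ, ?_, ?_⟩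
      · rw [map_sub, hhρ]; ring
      · rw [sub_sub_cancel]; exact hρΦ
    -- hard case: reflect through s
    push_neg at hd hr
    have hdecomp : α = s + (δ + ρ) := by rw [hρdef]; abel
    have hinner_decomp : ⟪α, α⟫ = ⟪α, s⟫ + (⟪α, δ⟫ + ⟪α, ρ⟫) := by
      conv_lhs => rw [show (⟪α, α⟫ : ℝ) = ⟪α, s + (δ + ρ)⟫ from
        congrArg (fun x => inner ℝ α x) hdecomp]
      rw [inner_add_right, inner_add_right]
    have hges : ⟪α, α⟫ ≤ ⟪α, s⟫ := by linarith
    -- crystallographic integers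
    obtain ⟨q, hq⟩ := hΦ.crystallographic s hsΦ α hαΦ
    obtain ⟨p, hp⟩ := hΦ.crystallographic α hαΦ s hsΦ
    rw [show inner ℝ s α = inner ℝ α s from real_inner_comm α s] at hp
    have hp2 : 2 ≤ p := by
      have : (2 : ℝ) ≤ p := by
        rw [hp, le_div_iff₀ hA]
        linarith
      exact_mod_cast this
    have hq1 : 1 ≤ q := by
      have : (0 : ℝ) < q := by rw [hq]; positivity
      exact_mod_cast this
    have hcs : ⟪α, s⟫ * ⟪α, s⟫ ≤ ⟪α, α⟫ * ⟪s, s⟫ := real_inner_mul_inner_self_le α s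
    have hcsne : ⟪α, s⟫ * ⟪α, s⟫ ≠ ⟪α, α⟫ * ⟪s, s⟫ := not_cs_eq hΦ hαΦ hsΦ hne1 hne2
    have hpq4 : ((p * q : ℤ) : ℝ) < 4 := by
      push_cast
      rw [hp, hq, div_mul_div_comm, div_lt_iff₀ (by positivity)]
      nlinarith [lt_of_le_of_ne hcs hcsne]
    have hqeq : q = 1 := by
      have h4 : (p * q : ℤ) < 4 := by exact_mod_cast hpq4
      nlinarith
    have hS2 : 2 * ⟪α, s⟫ = ⟪s, s⟫ := by
      have : (1 : ℝ) = 2 * ⟪α, s⟫ / ⟪s, s⟫ := by rw [← hq, hqeq]; norm_num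
      field_simp at this
      linarith
    -- α - s = δ + ρ and its positive inner products
    have hαs_self : 0 < ⟪α - s, α - s⟫ := inner_self_pos' hΦ hαs
    have hsum2 : ⟪α - s, δ⟫ + ⟪α - s, ρ⟫ = ⟪α - s, α - s⟫ := by
      have hδρ : δ + ρ = α - s := by rw [hρdef]; abel
      conv_rhs => rw [show (⟪α - s, α - s⟫ : ℝ) = ⟪α - s, δ + ρ⟫ from
        congrArg (fun x => inner ℝ (α - s) x) hδρ.symm]
      rw [inner_add_right]
    -- the reflection computation
    have hrefl : ∀ x : V, ⟪α, x - (2 * ⟪x, s⟫ / ⟪s, s⟫) • s⟫ = ⟪α - s, x⟫ := by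
      intro x
      rw [inner_sub_right, real_inner_smul_right, inner_sub_left]
      rw [show inner ℝ s x = inner ℝ x s from real_inner_comm x s]
      field_simp
      linear_combination (-(inner ℝ x s)) * hS2
    have hreflh : ∀ x : V, h (x - (2 * ⟪x, s⟫ / ⟪s, s⟫) • s) = h x := by
      intro x
      rw [map_sub, map_smul, hhs, smul_eq_mul, mul_zero, sub_zero]
    by_cases hd2 : 0 < ⟪α - s, δ⟫
    · set δ' : V := δ - (2 * ⟪δ, s⟫ / ⟪s, s⟫) • s with hδ'def
      have hδ'Φ : δ' ∈ Φ := hΦ.reflect_mem s hsΦ δ hδΦ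
      have hδ'1 : h δ' = 1 := by rw [hδ'def, hreflh, hδ1]
      have hip' : 0 < ⟪α, δ'⟫ := by rw [hδ'def, hrefl]; exact hd2
      refine ⟨δ', hδ'Φ, hδ'1, ?_⟩
      apply sub_mem_of_inner_pos hΦ hαΦ hδ'Φ hip'
      · intro he; rw [he, hδ'1] at h2; linarith
      · intro he
        have : h α = -h δ' := by rw [he, map_neg]
        rw [hδ'1] at this; rw [this] at h2; linarith
    · have hr2 : 0 < ⟪α - s, ρ⟫ := by
        push_neg at hd2
        linarith
      set ρ' : V := ρ - (2 * ⟪ρ, s⟫ / ⟪s, s⟫) • s with hρ'def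
      have hρ'Φ : ρ' ∈ Φ := hΦ.reflect_mem s hsΦ ρ hρΦ
      have hρ'h : h ρ' = h α - 1 := by rw [hρ'def, hreflh, hhρ]
      have hip' : 0 < ⟪α, ρ'⟫ := by rw [hρ'def, hrefl]; exact hr2
      have hne3 : α ≠ ρ' := by
        intro he
        have : h α = h α - 1 := by rw [← hρ'h, ← he]
        linarith
      have hne4 : α ≠ -ρ' := by
        intro he
        have : h α = -(h α - 1) := by rw [← hρ'h, ← map_neg, ← he]
        linarith
      have hτΦ : α - ρ' ∈ Φ := sub_mem_of_inner_pos hΦ hαΦ hρ'Φ hip' hne3 hne4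
      refine ⟨α - ρ', hτΦ, ?_, ?_⟩
      · rw [map_sub, hρ'h]; ring
      · rw [sub_sub_cancel]; exact hρ'Φ

lemma pos_of_mem_posLM (hΦ : IsIrrCrystRootSystem Φ) {α : V}
    (hα : α ∈ posLM Φ Pos L ∅) : α ∈ Pos := by
  rw [posLM_eq hΦ] at hα
  exact hα.1

/-- Decomposition of a level-`k` element of `Ψ` into `k` elements of `Ψ`. -/
lemma dec (hΦ : IsIrrCrystRootSystem Φ) (hf : ∀ α ∈ Φ, f α ≠ 0)
    (hPos : Pos = {α ∈ Φ | 0 < f α}) (hh0 : ∀ v ∈ L, h v = 0)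
    (hh1 : ∀ v ∈ simples Pos, v ∉ L → h v = 1) :
    ∀ k : ℕ, ∀ α ∈ posLM Φ Pos L ∅, h α = (k : ℝ) →
      ∃ l : List V, l.length = k ∧ (∀ β ∈ l, β ∈ posLM Φ Pos L ∅) ∧ l.sum = α := by
  intro k
  induction k with
  | zero =>
    intro α hα hk
    have := one_le_h hΦ hf hPos hh0 hh1 hα
    rw [hk] at this
    norm_num at this
  | succ k ihk =>
    intro α hα hk
    by_cases hk0 : k = 0
    · subst hk0
      exact ⟨[α], rfl, by simpa using hα, by simp⟩
    · have hαPos : α ∈ Pos := pos_of_mem_posLM hΦ hα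
      have hαΦ : α ∈ Φ := pos_subset hPos hαPos
      have h2 : 2 ≤ h α := by
        rw [hk]
        exact_mod_cast (by omega : 2 ≤ k + 1)
      obtain ⟨δ, hδΦ, hδ1, hρΦ⟩ := key hΦ hf hPos hh0 hh1 α hαΦ h2
      have hδmem : δ ∈ posLM Φ Pos L ∅ :=
        (mem_posLM_iff hΦ hf hPos hh0 hh1 hδΦ).mpr (by rw [hδ1]; norm_num)
      have hρh : h (α - δ) = (k : ℝ) := by
        rw [map_sub, hδ1, hk]
        push_cast
        ring
      have hρmem : α - δ ∈ posLM Φ Pos L ∅ := by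
        apply (mem_posLM_iff hΦ hf hPos hh0 hh1 hρΦ).mpr
        rw [hρh]
        exact_mod_cast Nat.pos_of_ne_zero hk0
      obtain ⟨l, hlen, hl, hsum⟩ := ihk (α - δ) hρmem hρh
      refine ⟨δ :: l, by simp [hlen], ?_, by rw [List.sum_cons, hsum]; abel⟩
      intro β hβ
      rcases List.mem_cons.mp hβ with hβ | hβ
      · rw [hβ]; exact hδmem
      · exact hl β hβ

lemma dL_eq (hΦ : IsIrrCrystRootSystem Φ) (hf : ∀ α ∈ Φ, f α ≠ 0)
    (hPos : Pos = {α ∈ Φ | 0 < f α}) (hh0 : ∀ v ∈ L, h v = 0)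
    (hh1 : ∀ v ∈ simples Pos, v ∉ L → h v = 1) {α : V}
    (hα : α ∈ posLM Φ Pos L ∅) {k : ℕ} (hk : h α = (k : ℝ)) :
    dL Φ Pos L α = k := by
  rw [dL, if_pos hα]
  have hub : ∀ m ∈ {n : ℕ | ∃ l : List V, l.length = n ∧
      (∀ β ∈ l, β ∈ posLM Φ Pos L ∅) ∧ l.sum = α}, m ≤ k := by
    rintro m ⟨l, hlen, hmem, hsum⟩
    have h1 : ((l.map fun β => h β).length : ℝ) ≤ (l.map fun β => h β).sum := by
      apply length_le_sum_of_one_le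
      intro x hx
      obtain ⟨β, hβ, rfl⟩ := List.mem_map.mp hx
      exact one_le_h hΦ hf hPos hh0 hh1 (hmem β hβ)
    rw [List.length_map, hlen] at h1
    have h2 : (l.map fun β => h β).sum = h α := by
      rw [← hsum, map_list_sum]
    rw [h2, hk] at h1
    exact_mod_cast h1
  have hmem : k ∈ {n : ℕ | ∃ l : List V, l.length = n ∧
      (∀ β ∈ l, β ∈ posLM Φ Pos L ∅) ∧ l.sum = α} :=
    dec hΦ hf hPos hh0 hh1 k α hα hk
  exact le_antisymm (csSup_le ⟨k, hmem⟩ hub) (le_csSup ⟨k, hub⟩ hmem)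

lemma mem_hat_of_pos (hPos : Pos = {α ∈ Φ | 0 < f α}) {α : V} (hα : α ∈ Pos) (m : ℕ) :
    ((α, (m : ℝ)) : V × ℝ) ∈ hat Pos Φ :=
  ⟨α, pos_subset hPos hα, m, rfl, Or.inl ⟨hα, rfl⟩⟩

lemma hat_fst_mem {x : V × ℝ} (hx : x ∈ hat Pos Φ) : x.1 ∈ Φ := by
  obtain ⟨α, hα, m, h1, _⟩ := hx
  rw [h1]; exact hα

lemma hat_snd_nonneg {x : V × ℝ} (hx : x ∈ hat Pos Φ) : 0 ≤ x.2 := by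
  obtain ⟨α, hα, m, h1, hc⟩ := hx
  rcases hc with ⟨_, h2⟩ | ⟨_, h2⟩ <;> rw [h2] <;> positivity

lemma hat_snd_nat (hΦ : IsIrrCrystRootSystem Φ) {x : V × ℝ} (hx : x ∈ hat Pos Φ)
    (hpos : x.1 ∈ Pos) : ∃ m : ℕ, x.2 = (m : ℝ) := by
  obtain ⟨α, hα, m, h1, hc⟩ := hx
  rcases hc with ⟨_, h2⟩ | ⟨hneg, _⟩
  · exact ⟨m, h2⟩
  · rw [h1] at hpos
    exact absurd hpos hneg

/-- Generation: every element of the claimed closure is actually generated. -/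
lemma gen (hΦ : IsIrrCrystRootSystem Φ) (hf : ∀ α ∈ Φ, f α ≠ 0)
    (hPos : Pos = {α ∈ Φ | 0 < f α}) (hh0 : ∀ v ∈ L, h v = 0)
    (hh1 : ∀ v ∈ simples Pos, v ∉ L → h v = 1) (n : ℕ) :
    ∀ k : ℕ, ∀ α ∈ posLM Φ Pos L ∅, h α = (k : ℝ) → ∀ m : ℕ, m ≤ n * k →
      ((α, (m : ℝ)) : V × ℝ) ∈ closureIn (hat Pos Φ)
        {x : V × ℝ | ∃ α ∈ posLM Φ Pos L ∅, ∃ k : ℕ, k ≤ n ∧ x = (α, (k : ℝ))} := by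
  have hXT : {x : V × ℝ | ∃ α ∈ posLM Φ Pos L ∅, ∃ k : ℕ, k ≤ n ∧ x = (α, (k : ℝ))}
      ⊆ hat Pos Φ := by
    rintro x ⟨α, hα, m, hm, rfl⟩
    exact mem_hat_of_pos hPos (pos_of_mem_posLM hΦ hα) m
  intro k
  induction k with
  | zero =>
    intro α hα hk m hm
    have := one_le_h hΦ hf hPos hh0 hh1 hα
    rw [hk] at this
    norm_num at this
  | succ k ihk =>
    intro α hα hk m hm
    by_cases hk0 : k = 0
    · subst hk0
      apply subset_closureIn
      exact ⟨α, hα, m, by omega, rfl⟩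
    · have hαPos : α ∈ Pos := pos_of_mem_posLM hΦ hα
      have hαΦ : α ∈ Φ := pos_subset hPos hαPos
      have h2 : 2 ≤ h α := by
        rw [hk]
        exact_mod_cast (by omega : 2 ≤ k + 1)
      obtain ⟨δ, hδΦ, hδ1, hρΦ⟩ := key hΦ hf hPos hh0 hh1 α hαΦ h2
      have hδmem : δ ∈ posLM Φ Pos L ∅ :=
        (mem_posLM_iff hΦ hf hPos hh0 hh1 hδΦ).mpr (by rw [hδ1]; norm_num)
      have hρh : h (α - δ) = (k : ℝ) := by
        rw [map_sub, hδ1, hk]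
        push_cast
        ring
      have hρmem : α - δ ∈ posLM Φ Pos L ∅ := by
        apply (mem_posLM_iff hΦ hf hPos hh0 hh1 hρΦ).mpr
        rw [hρh]
        exact_mod_cast Nat.pos_of_ne_zero hk0
      set m₁ : ℕ := min m n with hm₁def
      set m₂ : ℕ := m - m₁ with hm₂def
      have hm₁ : m₁ ≤ n := min_le_right m n
      have hm₂ : m₂ ≤ n * k := by
        have hm' : m ≤ n * k + n := by rwa [Nat.mul_succ] at hm
        simp only [hm₂def, hm₁def]
        omega
      have hδcl : ((δ, (m₁ : ℝ)) : V × ℝ) ∈ closureIn (hat Pos Φ)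
          {x : V × ℝ | ∃ α ∈ posLM Φ Pos L ∅, ∃ k : ℕ, k ≤ n ∧ x = (α, (k : ℝ))} :=
        subset_closureIn ⟨δ, hδmem, m₁, hm₁, rfl⟩
      have hρcl := ihk (α - δ) hρmem hρh m₂ hm₂
      have hpt : (1 : ℝ) • ((δ, (m₁ : ℝ)) : V × ℝ)
          + (1 : ℝ) • ((α - δ, (m₂ : ℝ)) : V × ℝ) = (α, (m : ℝ)) := by
        rw [one_smul, one_smul, Prod.mk_add_mk]
        have hfst : δ + (α - δ) = α := by abel
        have hsnd : (m₁ : ℝ) + (m₂ : ℝ) = (m : ℝ) := by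
          have : m₁ + m₂ = m := by omega
          exact_mod_cast congrArg (fun t : ℕ => (t : ℝ)) this
        rw [hfst, hsnd]
      have := (isClosedIn_closureIn hXT).2 _ hδcl _ hρcl 1 1 zero_le_one zero_le_one
        (by rw [hpt]; exact mem_hat_of_pos hPos hαPos m)
      rwa [hpt] at this

end HLemmas

end AffineBiclosed

open AffineBiclosed in
/-- Let `(Φ⁺_{L,∅})_n = {α + kδ | α ∈ Φ⁺_{L,∅}, 0 ≤ k ≤ n}` in the affine positive system
`Φ̃⁺`. Then its closure in `Φ̃⁺` equals `{α + kδ | α ∈ Φ⁺_{L,∅}, 0 ≤ k ≤ n·d_L(α)}`;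
in particular, this closure is finite, and moreover it is biclosed in `Φ̃⁺`. -/
theorem closure_of_truncated_set
    {V : Type*} [NormedAddCommGroup V] [InnerProductSpace ℝ V]
    {Φ Pos : Set V} (hΦ : IsIrrCrystRootSystem Φ) (hPos : IsPositiveSystem Φ Pos)
    {L : Set V} (hL : L ⊂ simples Pos) (n : ℕ) :
    closureIn (hat Pos Φ)
        {x : V × ℝ | ∃ α ∈ posLM Φ Pos L ∅, ∃ k : ℕ, k ≤ n ∧ x = (α, (k : ℝ))}
      = {x : V × ℝ | ∃ α ∈ posLM Φ Pos L ∅, ∃ k : ℕ, k ≤ n * dL Φ Pos L α ∧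
          x = (α, (k : ℝ))} ∧
    (closureIn (hat Pos Φ)
        {x : V × ℝ | ∃ α ∈ posLM Φ Pos L ∅, ∃ k : ℕ, k ≤ n ∧ x = (α, (k : ℝ))}).Finite ∧
    IsBiclosedIn (hat Pos Φ)
      (closureIn (hat Pos Φ)
        {x : V × ℝ | ∃ α ∈ posLM Φ Pos L ∅, ∃ k : ℕ, k ≤ n ∧ x = (α, (k : ℝ))}) := by
  classical
  obtain ⟨f, hf, hPosEq⟩ := hPos
  obtain ⟨h, hh0, hh1⟩ := exists_h hΦ hf hPosEq hL.subset
  set X : Set (V × ℝ) :=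
    {x : V × ℝ | ∃ α ∈ posLM Φ Pos L ∅, ∃ k : ℕ, k ≤ n ∧ x = (α, (k : ℝ))} with hXdef
  set C : Set (V × ℝ) :=
    {x : V × ℝ | ∃ α ∈ posLM Φ Pos L ∅, ∃ k : ℕ, k ≤ n * dL Φ Pos L α ∧
      x = (α, (k : ℝ))} with hCdef
  set C' : Set (V × ℝ) :=
    {x : V × ℝ | x ∈ hat Pos Φ ∧ 0 < h x.1 ∧ x.2 ≤ (n : ℝ) * h x.1} with hC'def
  have hXT : X ⊆ hat Pos Φ := by
    rintro x ⟨α, hα, m, hm, rfl⟩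
    exact mem_hat_of_pos hPosEq (pos_of_mem_posLM hΦ hα) m
  have hCC' : C = C' := by
    ext x
    constructor
    · rintro ⟨α, hα, m, hm, rfl⟩
      have hαPos := pos_of_mem_posLM hΦ hα
      obtain ⟨k, hk⟩ := h_nat_of_pos hΦ hf hPosEq hh0 hh1 hαPos
      have hdL : dL Φ Pos L α = k := dL_eq hΦ hf hPosEq hh0 hh1 hα hk
      refine ⟨mem_hat_of_pos hPosEq hαPos m, ?_, ?_⟩
      · show 0 < h α
        linarith [one_le_h hΦ hf hPosEq hh0 hh1 hα]
      · show (m : ℝ) ≤ (n : ℝ) * h α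
        rw [hk]
        rw [hdL] at hm
        exact_mod_cast hm
    · rintro ⟨hxT, hpos, hle⟩
      have hx1Φ : x.1 ∈ Φ := hat_fst_mem hxT
      have hx1mem : x.1 ∈ posLM Φ Pos L ∅ :=
        (mem_posLM_iff hΦ hf hPosEq hh0 hh1 hx1Φ).mpr hpos
      have hx1Pos : x.1 ∈ Pos := pos_of_mem_posLM hΦ hx1mem
      obtain ⟨m, hm⟩ := hat_snd_nat hΦ hxT hx1Pos
      obtain ⟨k, hk⟩ := h_nat_of_pos hΦ hf hPosEq hh0 hh1 hx1Pos
      have hdL : dL Φ Pos L x.1 = k := dL_eq hΦ hf hPosEq hh0 hh1 hx1mem hk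
      refine ⟨x.1, hx1mem, m, ?_, ?_⟩
      · rw [hdL]
        rw [hm, hk] at hle
        exact_mod_cast hle
      · rw [← hm]
  have hC'closed : IsClosedIn (hat Pos Φ) C' := by
    constructor
    · exact fun x hx => hx.1
    · rintro a ⟨haT, hah, hale⟩ b ⟨hbT, hbh, hble⟩ k₁ k₂ hk₁ hk₂ hcT
      have hfst : (k₁ • a + k₂ • b).1 = k₁ • a.1 + k₂ • b.1 := rfl
      have hsnd : (k₁ • a + k₂ • b).2 = k₁ * a.2 + k₂ * b.2 := rfl
      have hhsum : h (k₁ • a + k₂ • b).1 = k₁ * h a.1 + k₂ * h b.1 := by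
        rw [hfst, map_add, map_smul, map_smul, smul_eq_mul, smul_eq_mul]
      have hhpos : 0 < h (k₁ • a + k₂ • b).1 := by
        rw [hhsum]
        rcases eq_or_lt_of_le hk₁ with hk | hk
        · rcases eq_or_lt_of_le hk₂ with hk' | hk'
          · exfalso
            have hzero : (k₁ • a + k₂ • b).1 = 0 := by rw [hfst, ← hk, ← hk']; simp
            exact hΦ.nonzero (hzero ▸ hat_fst_mem hcT)
          · nlinarith
        · nlinarith
      refine ⟨hcT, hhpos, ?_⟩
      rw [hsnd, hhsum]
      nlinarith [mul_le_mul_of_nonneg_left hale hk₁, mul_le_mul_of_nonneg_left hble hk₂]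
  have hXC' : X ⊆ C' := by
    rintro x ⟨α, hα, m, hm, rfl⟩
    refine ⟨mem_hat_of_pos hPosEq (pos_of_mem_posLM hΦ hα) m, ?_, ?_⟩
    · show 0 < h α
      linarith [one_le_h hΦ hf hPosEq hh0 hh1 hα]
    · show (m : ℝ) ≤ (n : ℝ) * h α
      have h1 := one_le_h hΦ hf hPosEq hh0 hh1 hα
      have hmn : (m : ℝ) ≤ (n : ℝ) := by exact_mod_cast hm
      nlinarith [Nat.cast_nonneg (α := ℝ) n]
  have hclosureC' : closureIn (hat Pos Φ) X = C' := by
    apply Set.Subset.antisymm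
    · exact closureIn_subset hXC' hC'closed
    · rintro x ⟨hxT, hpos, hle⟩
      have hx1Φ := hat_fst_mem hxT
      have hx1mem := (mem_posLM_iff hΦ hf hPosEq hh0 hh1 hx1Φ).mpr hpos
      have hx1Pos := pos_of_mem_posLM hΦ hx1mem
      obtain ⟨m, hm⟩ := hat_snd_nat hΦ hxT hx1Pos
      obtain ⟨k, hk⟩ := h_nat_of_pos hΦ hf hPosEq hh0 hh1 hx1Pos
      have hmk : m ≤ n * k := by
        rw [hm, hk] at hle
        exact_mod_cast hle
      have hgen := gen hΦ hf hPosEq hh0 hh1 n k x.1 hx1mem hk m hmk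
      have hxeq : x = (x.1, (m : ℝ)) := by rw [← hm]
      rw [hxeq]
      exact hgen
  have hcomp : IsClosedIn (hat Pos Φ) (hat Pos Φ \ C') := by
    constructor
    · exact Set.diff_subset
    · rintro a ⟨haT, haC⟩ b ⟨hbT, hbC⟩ k₁ k₂ hk₁ hk₂ hcT
      refine ⟨hcT, ?_⟩
      rintro ⟨-, hpos, hle⟩
      have hbound : ∀ {x : V × ℝ}, x ∈ hat Pos Φ → x ∉ C' →
          ((n : ℝ) * h x.1 ≤ x.2 ∧ (0 < h x.1 → (n : ℝ) * h x.1 < x.2)) := by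
        intro x hxT hxC
        by_cases hx : 0 < h x.1
        · have hcle : ¬ x.2 ≤ (n : ℝ) * h x.1 := fun hc => hxC ⟨hxT, hx, hc⟩
          push_neg at hcle
          exact ⟨hcle.le, fun _ => hcle⟩
        · push_neg at hx
          have h2 := hat_snd_nonneg hxT
          have h3 : (n : ℝ) * h x.1 ≤ 0 :=
            mul_nonpos_of_nonneg_of_nonpos (by positivity) hx
          exact ⟨h3.trans h2, fun hc => absurd hc (not_lt.mpr hx)⟩
      obtain ⟨ha1, ha2⟩ := hbound haT haC
      obtain ⟨hb1, hb2⟩ := hbound hbT hbC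
      have hfst : (k₁ • a + k₂ • b).1 = k₁ • a.1 + k₂ • b.1 := rfl
      have hsnd : (k₁ • a + k₂ • b).2 = k₁ * a.2 + k₂ * b.2 := rfl
      have hhsum : h (k₁ • a + k₂ • b).1 = k₁ * h a.1 + k₂ * h b.1 := by
        rw [hfst, map_add, map_smul, map_smul, smul_eq_mul, smul_eq_mul]
      rw [hhsum] at hpos hle
      rw [hsnd] at hle
      have hcases : 0 < k₁ * h a.1 ∨ 0 < k₂ * h b.1 := by
        by_contra hcon
        push_neg at hcon
        linarith [hcon.1, hcon.2]
      rcases hcases with hcase | hcase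
      · have hk₁pos : 0 < k₁ := by
          rcases eq_or_lt_of_le hk₁ with hk | hk
          · exfalso; rw [← hk] at hcase; simp at hcase
          · exact hk
        have hha : 0 < h a.1 := by
          rcases mul_pos_iff.mp hcase with ⟨_, hh⟩ | ⟨hh, _⟩
          · exact hh
          · linarith
        have hstrict := ha2 hha
        nlinarith [mul_lt_mul_of_pos_left hstrict hk₁pos,
          mul_le_mul_of_nonneg_left hb1 hk₂]
      · have hk₂pos : 0 < k₂ := by
          rcases eq_or_lt_of_le hk₂ with hk | hk
          · exfalso; rw [← hk] at hcase; simp at hcase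
          · exact hk
        have hhb : 0 < h b.1 := by
          rcases mul_pos_iff.mp hcase with ⟨_, hh⟩ | ⟨hh, _⟩
          · exact hh
          · linarith
        have hstrict := hb2 hhb
        nlinarith [mul_lt_mul_of_pos_left hstrict hk₂pos,
          mul_le_mul_of_nonneg_left ha1 hk₁]
  refine ⟨?_, ?_, ?_⟩
  · rw [hclosureC']
    exact hCC'.symm
  · rw [hclosureC', ← hCC']
    have hCU : C ⊆ ⋃ α ∈ Φ, (fun m : ℕ => ((α, (m : ℝ)) : V × ℝ)) ''
        (Set.Iic (n * dL Φ Pos L α)) := by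
      rintro x ⟨α, hα, m, hm, rfl⟩
      exact Set.mem_biUnion (pos_subset hPosEq (pos_of_mem_posLM hΦ hα)) ⟨m, hm, rfl⟩
    exact ((hΦ.finite.biUnion fun α _ => (Set.finite_Iic _).image _)).subset hCU
  · rw [hclosureC']
    exact ⟨hC'closed, hcomp⟩
end

section
/- Let C be a closed subset of the affine positive system Φ̃⁺ and α ∈ Φ. If there exist m, n ∈ ℤ_{≥1} with α + nδ ∈ C and −α + mδ ∈ C, then C is infinite. -/
open scoped RealInnerProductSpace

open AffineBiclosed in
/-- Let `C` be a closed subset of the affine positive system `Φ̃⁺` and `α ∈ Φ`. If there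
exist `m, n ∈ ℤ_{≥1}` with `α + nδ ∈ C` and `−α + mδ ∈ C`, then `C` is infinite. -/
theorem closed_set_with_opposite_roots_infinite
    {V : Type*} [NormedAddCommGroup V] [InnerProductSpace ℝ V]
    {Φ Pos : Set V} (hΦ : IsIrrCrystRootSystem Φ) (hPos : IsPositiveSystem Φ Pos)
    {C : Set (V × ℝ)} (hC : IsClosedIn (hat Pos Φ) C)
    {α : V} (hα : α ∈ Φ) {m n : ℕ} (hm : 1 ≤ m) (hn : 1 ≤ n)
    (h₁ : ((α, (n : ℝ)) : V × ℝ) ∈ C) (h₂ : ((-α, (m : ℝ)) : V × ℝ) ∈ C) :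
    C.Infinite := by
  apply Set.infinite_of_injective_forall_mem
    (f := fun t : ℕ => ((α, (n : ℝ) + t * ((n : ℝ) + m)) : V × ℝ))
  · intro a b hab
    have h2 : (0:ℝ) < (n : ℝ) + m := by positivity
    have h3 := congrArg Prod.snd hab
    simp only at h3
    have h4 : (a : ℝ) * ((n:ℝ)+m) = b * ((n:ℝ)+m) := by linarith
    have h5 : (a : ℝ) = b := mul_right_cancel₀ (ne_of_gt h2) h4
    exact_mod_cast h5
  · intro t
    have key : ((α, (n : ℝ) + t * ((n : ℝ) + m)) : V × ℝ)
        = ((t : ℝ) + 1) • ((α, (n : ℝ)) : V × ℝ) + (t : ℝ) • ((-α, (m : ℝ)) : V × ℝ) := by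
      simp [Prod.ext_iff, Prod.smul_def, smul_eq_mul]
      constructor
      · module
      · ring
    rw [key]
    apply hC.2 _ h₁ _ h₂ _ _ (by positivity) (by positivity)
    rw [← key]
    refine ⟨α, hα, ?_⟩
    by_cases hp : α ∈ Pos
    · exact ⟨n + t * (n + m), rfl, Or.inl ⟨hp, by push_cast; ring⟩⟩
    · refine ⟨n - 1 + t * (n + m), rfl, Or.inr ⟨hp, ?_⟩⟩
      have : (↑(n - 1) : ℝ) = (n : ℝ) - 1 := by
        have : 1 ≤ n := hn
        push_cast [this]; ring
      push_cast [this]; ring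
end

section
/- Let W̃ be an irreducible affine Weyl group and x ∈ W̃. For α ∈ Φ, set α₀ = α if α ∈ Φ⁺ and α₀ = α + δ if α ∈ Φ⁻. If α₀ + kδ ∈ Φ_x with k ≥ 0, then α₀, α₀+δ, …, α₀+kδ are all contained in Φ_x. -/
open scoped RealInnerProductSpace

open AffineBiclosed in
lemma affineWeyl_shift
    {V : Type*} [NormedAddCommGroup V] [InnerProductSpace ℝ V]
    {Φ Pos : Set V} {x : Equiv.Perm (V × ℝ)} (hx : x ∈ affineWeyl Φ Pos) :
    ∀ (v : V) (s t : ℝ), x (v, s + t) = ((x (v, s)).1, (x (v, s)).2 + t) := by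
  induction hx using Subgroup.closure_induction with
  | mem g hg =>
    obtain ⟨a, _, rfl⟩ := hg
    intro v s t
    show reflVec a (v, s + t) = ((reflVec a (v, s)).1, (reflVec a (v, s)).2 + t)
    unfold reflVec
    refine Prod.ext rfl ?_
    show s + t - (2 * ⟪ v, a.1 ⟫ / ⟪ a.1, a.1 ⟫) * a.2
        = s - (2 * ⟪ v, a.1 ⟫ / ⟪ a.1, a.1 ⟫) * a.2 + t
    ring
  | one => intro v s t; rfl
  | mul y z _ _ hy hz =>
    intro v s t
    show y (z (v, s + t)) = _
    rw [hz v s t, hy]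
    rfl
  | inv y _ hy =>
    intro v s t
    have h2 : y ((y⁻¹ (v, s)).1, (y⁻¹ (v, s)).2) = (v, s) := by
      rw [Prod.mk.eta]; exact y.apply_symm_apply _
    have h1 := hy (y⁻¹ (v, s)).1 (y⁻¹ (v, s)).2 t
    rw [h2] at h1
    have : (y⁻¹ : Equiv.Perm (V × ℝ)) (v, s + t)
        = y⁻¹ (y ((y⁻¹ (v, s)).1, (y⁻¹ (v, s)).2 + t)) := by rw [h1]
    rw [this, Equiv.Perm.inv_def, Equiv.symm_apply_apply]

open AffineBiclosed in
/-- Let `x ∈ W̃`. For `α ∈ Φ`, set `α₀ = α` if `α ∈ Φ⁺` and `α₀ = α + δ` if `α ∈ Φ⁻`.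
If `α₀ + kδ ∈ Φ_x` with `k ≥ 0`, then `α₀, α₀+δ, …, α₀+kδ` all lie in `Φ_x`. -/
theorem delta_string_downward_closed
    {V : Type*} [NormedAddCommGroup V] [InnerProductSpace ℝ V]
    {Φ Pos : Set V} (hΦ : IsIrrCrystRootSystem Φ) (hPos : IsPositiveSystem Φ Pos)
    {x : Equiv.Perm (V × ℝ)} (hx : x ∈ affineWeyl Φ Pos)
    {α : V} (hα : α ∈ Φ) {c : ℝ}
    (hc : (α ∈ Pos ∧ c = 0) ∨ (α ∉ Pos ∧ c = 1)) {k : ℕ}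
    (h : ((α, c + (k : ℝ)) : V × ℝ) ∈ invSetOf Φ Pos x) :
    ∀ j : ℕ, j ≤ k → ((α, c + (j : ℝ)) : V × ℝ) ∈ invSetOf Φ Pos x := by
  obtain ⟨ha, hb⟩ := h
  intro j hj
  have hP := affineWeyl_shift (inv_mem hx)
  constructor
  · refine ⟨α, hα, j, rfl, ?_⟩
    rcases hc with ⟨hp, rfl⟩ | ⟨hp, rfl⟩
    · exact Or.inl ⟨hp, by ring⟩
    · exact Or.inr ⟨hp, by ring⟩
  · rw [hP α c (k : ℝ)] at hb
    rw [hP α c (j : ℝ)]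
    set β := ((x⁻¹ : Equiv.Perm (V × ℝ)) (α, c)).1
    set s := ((x⁻¹ : Equiv.Perm (V × ℝ)) (α, c)).2
    obtain ⟨γ, hγ, n, h1, h2⟩ := hb
    refine ⟨γ, hγ, n + (k - j), h1, ?_⟩
    have hc2 : ((k - j : ℕ) : ℝ) = (k : ℝ) - (j : ℝ) := by
      push_cast [Nat.cast_sub hj]; ring
    rcases h2 with ⟨hp, he⟩ | ⟨hp, he⟩
    · refine Or.inl ⟨hp, ?_⟩
      show -(s + (j : ℝ)) = ((n + (k - j) : ℕ) : ℝ)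
      have he' : (-(β, s + (k : ℝ)) : V × ℝ).2 = (n : ℝ) := he
      push_cast [hc2]
      simp only [Prod.snd_neg] at he'
      linarith
    · refine Or.inr ⟨hp, ?_⟩
      show -(s + (j : ℝ)) = ((n + (k - j) : ℕ) : ℝ) + 1
      have he' : (-(β, s + (k : ℝ)) : V × ℝ).2 = (n : ℝ) + 1 := he
      push_cast [hc2]
      simp only [Prod.snd_neg] at he'
      linarith
end
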